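/- arXiv:1508.03876 — 3 statements merged into one kernel-verified Lean document; each statement's English description precedes it below -/
import Mathlib

section
/- For every n ≥ 1, the complex of injective words on n letters is (n−1)-spherical: the augmented chain complex whose i-th term (for 0 ≤ i ≤ n−1) is the free abelian group on the set of injective (i+1)-tuples of elements of Fin n, with boundary map given by the alternating sum of deleting one entry, d(v_0, …, v_i) = Σ_{j=0}^{i} (−1)^j (v_0, …, v_{j-1}, v_{j+1}, …, v_i), and with augmentation sending each 1-tuple to 1 ∈ ℤ in degree −1, is exact in every degree except n−1; that is, its reduced homology H̃_i vanishes for all i ≠ n−1. -/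
open CategoryTheory

/-- Commutation rule for deleting two entries of a list. -/
theorem eraseIdx_eraseIdx_comm {α : Type*} :
    ∀ (l : List α) (i j : ℕ), i ≤ j →
      (l.eraseIdx i).eraseIdx j = (l.eraseIdx (j + 1)).eraseIdx i := by
  intro l
  induction l with
  | nil => intro i j _; simp
  | cons a t ih =>
    intro i j hij
    match i, j with
    | 0, j => simp
    | i + 1, j + 1 =>
      simp only [List.eraseIdx_cons_succ]
      rw [ih i j (by omega)]

variable {α : Type} (P : List α → Prop) (hP : ∀ (l : List α) (j : ℕ), P l → P (l.eraseIdx j))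

/-- Words (ordered tuples) of length `d` satisfying the admissibility predicate `P`:
the basis of the degree-`d` term of the augmented chain complex (a word of length `d`
is a `(d-1)`-simplex, the empty word generating the augmentation `ℤ` in degree `-1`). -/
def Word (d : ℕ) : Type := {l : List α // P l ∧ l.length = d}

/-- Deletion of the `j`-th entry of a word. -/
def eraseWord {d : ℕ} (l : Word P (d + 1)) (j : Fin (d + 1)) : Word P d :=
  ⟨l.1.eraseIdx j, hP l.1 j l.2.1, by
    have h := l.2.2
    rw [List.length_eraseIdx_of_lt (by omega)]
    omega⟩

/-- The boundary map: the alternating sum of the entry deletions. -/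
noncomputable def wordBoundary (d : ℕ) : (Word P (d + 1) →₀ ℤ) →ₗ[ℤ] (Word P d →₀ ℤ) :=
  Finsupp.lsum ℤ fun l =>
    ∑ j : Fin (d + 1), ((-1 : ℤ) ^ (j : ℕ)) • Finsupp.lsingle (eraseWord P hP l j)

theorem wordBoundary_single {d : ℕ} (l : Word P (d + 1)) (b : ℤ) :
    wordBoundary P hP d (Finsupp.single l b)
      = ∑ j : Fin (d + 1), ((-1 : ℤ) ^ (j : ℕ)) • Finsupp.single (eraseWord P hP l j) b := by
  simp [wordBoundary, Finsupp.lsum_single, LinearMap.sum_apply, LinearMap.smul_apply,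
    Finsupp.lsingle_apply]

/-- The sign-reversing involution on pairs of deletion indices, pairing
`(j, i)` (first delete entry `j`, then entry `i`) with the pair of indices deleting
the same two entries in the other order. -/
def deletionInvolution (d : ℕ) :
    Fin (d + 2) × Fin (d + 1) → Fin (d + 2) × Fin (d + 1) := fun p =>
  if h : (p.2 : ℕ) < (p.1 : ℕ)
  then (⟨(p.2 : ℕ), by have := p.2.2; omega⟩, ⟨(p.1 : ℕ) - 1, by have := p.1.2; omega⟩)
  else (⟨(p.2 : ℕ) + 1, by have := p.2.2; omega⟩, ⟨(p.1 : ℕ), by have := p.2.2; omega⟩)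

theorem deletionInvolution_of_lt {d : ℕ} {j : Fin (d + 2)} {i : Fin (d + 1)}
    (h : (i : ℕ) < (j : ℕ)) :
    deletionInvolution d (j, i)
      = (⟨(i : ℕ), by have := i.2; omega⟩, ⟨(j : ℕ) - 1, by have := j.2; omega⟩) := by
  simp only [deletionInvolution]
  exact dif_pos h

theorem deletionInvolution_of_ge {d : ℕ} {j : Fin (d + 2)} {i : Fin (d + 1)}
    (h : ¬ (i : ℕ) < (j : ℕ)) :
    deletionInvolution d (j, i)
      = (⟨(i : ℕ) + 1, by have := i.2; omega⟩, ⟨(j : ℕ), by have := i.2; omega⟩) := by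
  simp only [deletionInvolution]
  exact dif_neg h

theorem wordBoundary_comp_wordBoundary (d : ℕ) :
    (wordBoundary P hP d).comp (wordBoundary P hP (d + 1)) = 0 := by
  apply Finsupp.lhom_ext
  intro l b
  rw [LinearMap.comp_apply, wordBoundary_single, map_sum, LinearMap.zero_apply]
  set f : Fin (d + 2) × Fin (d + 1) → (Word P d →₀ ℤ) := fun p =>
    (((-1 : ℤ) ^ (p.1 : ℕ)) * ((-1 : ℤ) ^ (p.2 : ℕ))) •
      Finsupp.single (eraseWord P hP (eraseWord P hP l p.1) p.2) b with hf
  have step : ∀ j : Fin (d + 2),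
      wordBoundary P hP d (((-1 : ℤ) ^ (j : ℕ)) • Finsupp.single (eraseWord P hP l j) b)
        = ∑ i : Fin (d + 1), f (j, i) := by
    intro j
    simp only [hf]
    rw [map_smul, wordBoundary_single, Finset.smul_sum]
    exact Finset.sum_congr rfl fun i _ => smul_smul _ _ _
  rw [Finset.sum_congr rfl (fun j _ => step j), ← Fintype.sum_prod_type]
  apply Finset.sum_ninvolution (deletionInvolution d)
  · -- the two terms of a matched pair cancel
    rintro ⟨j, i⟩
    by_cases h : (i : ℕ) < (j : ℕ)
    · rw [deletionInvolution_of_lt h]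
      simp only [hf]
      have hword : eraseWord P hP (eraseWord P hP l ⟨(i : ℕ), by have := i.2; omega⟩)
            ⟨(j : ℕ) - 1, by have := j.2; omega⟩
          = eraseWord P hP (eraseWord P hP l j) i := by
        apply Subtype.ext
        show (l.1.eraseIdx (i : ℕ)).eraseIdx ((j : ℕ) - 1) = (l.1.eraseIdx (j : ℕ)).eraseIdx i
        rw [eraseIdx_eraseIdx_comm l.1 (i : ℕ) ((j : ℕ) - 1) (by omega)]
        congr 2
        omega
      rw [hword, ← add_smul]
      have hcoef : ((-1 : ℤ) ^ (j : ℕ) * (-1 : ℤ) ^ (i : ℕ)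
          + (-1 : ℤ) ^ (i : ℕ) * (-1 : ℤ) ^ ((j : ℕ) - 1)) = 0 := by
        obtain ⟨m, hm⟩ : ∃ m, (j : ℕ) = m + 1 := ⟨(j : ℕ) - 1, by omega⟩
        rw [hm]
        simp only [Nat.add_sub_cancel]
        rw [pow_succ]
        ring
      rw [hcoef, zero_smul]
    · rw [deletionInvolution_of_ge h]
      simp only [hf]
      have hword : eraseWord P hP (eraseWord P hP l ⟨(i : ℕ) + 1, by have := i.2; omega⟩)
            ⟨(j : ℕ), by have := i.2; omega⟩
          = eraseWord P hP (eraseWord P hP l j) i := by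
        apply Subtype.ext
        show (l.1.eraseIdx ((i : ℕ) + 1)).eraseIdx (j : ℕ) = (l.1.eraseIdx (j : ℕ)).eraseIdx i
        rw [← eraseIdx_eraseIdx_comm l.1 (j : ℕ) (i : ℕ) (by omega)]
      rw [hword, ← add_smul]
      have hcoef : ((-1 : ℤ) ^ (j : ℕ) * (-1 : ℤ) ^ (i : ℕ)
          + (-1 : ℤ) ^ ((i : ℕ) + 1) * (-1 : ℤ) ^ (j : ℕ)) = 0 := by
        rw [pow_succ]
        ring
      rw [hcoef, zero_smul]
  · -- the involution has no fixed point with nonzero contribution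
    rintro ⟨j, i⟩ _
    by_cases h : (i : ℕ) < (j : ℕ)
    · rw [deletionInvolution_of_lt h]
      intro hcon
      have h1 : (i : ℕ) = (j : ℕ) :=
        congrArg (fun q : Fin (d + 2) × Fin (d + 1) => (q.1 : ℕ)) hcon
      omega
    · rw [deletionInvolution_of_ge h]
      intro hcon
      have h1 : (i : ℕ) + 1 = (j : ℕ) :=
        congrArg (fun q : Fin (d + 2) × Fin (d + 1) => (q.1 : ℕ)) hcon
      have h2 : (j : ℕ) = (i : ℕ) :=
        congrArg (fun q : Fin (d + 2) × Fin (d + 1) => (q.2 : ℕ)) hcon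
      omega
  · intro a; exact Finset.mem_univ _
  · -- the pairing is an involution
    rintro ⟨j, i⟩
    by_cases h : (i : ℕ) < (j : ℕ)
    · rw [deletionInvolution_of_lt h, deletionInvolution_of_ge (by simp; omega)]
      apply Prod.ext
      · apply Fin.ext; simp; omega
      · apply Fin.ext; simp
    · rw [deletionInvolution_of_ge h, deletionInvolution_of_lt (by simp; omega)]
      apply Prod.ext
      · apply Fin.ext; simp
      · apply Fin.ext; simp

/-- The augmented chain complex of admissible words: in degree `d` the free abelian group
on words of length `d` (so degree `0` is the augmentation copy of `ℤ`, spanned by the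
empty word, and a word of length `d` is a simplex of dimension `d - 1`), with boundary
the alternating sum of entry deletions. -/
noncomputable def wordComplex : ChainComplex (ModuleCat ℤ) ℕ :=
  ChainComplex.of (fun d => ModuleCat.of ℤ (Word P d →₀ ℤ))
    (fun d => ModuleCat.ofHom (wordBoundary P hP d))
    (fun d => by
      have h := wordBoundary_comp_wordBoundary P hP d
      exact ModuleCat.hom_ext (LinearMap.ext fun x => DFunLike.congr_fun h x))

section Spherical

variable (hcons : ∀ (a : α) (l : List α), P l → a ∉ l → P (a :: l))

/-- Prepending a fresh letter to a word. -/
def consWord {d : ℕ} (a : α) (w : Word P d) (hm : a ∉ w.1) : Word P (d + 1) :=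
  ⟨a :: w.1, hcons a w.1 w.2.1 hm, by simp [w.2.2]⟩

open Classical in
/-- The partial homotopy: prepend `a` to words avoiding `a`, kill the others. -/
noncomputable def prependMap (a : α) (d : ℕ) :
    (Word P d →₀ ℤ) →ₗ[ℤ] (Word P (d + 1) →₀ ℤ) :=
  Finsupp.lsum ℤ fun w =>
    if hm : a ∈ w.1 then 0 else Finsupp.lsingle (consWord P hcons a w hm)

theorem prependMap_single_of_not_mem {a : α} {d : ℕ} {w : Word P d} (hm : a ∉ w.1) (c : ℤ) :
    prependMap P hcons a d (Finsupp.single w c)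
      = Finsupp.single (consWord P hcons a w hm) c := by
  simp [prependMap, Finsupp.lsum_single, hm]

theorem prependMap_single_of_mem {a : α} {d : ℕ} {w : Word P d} (hm : a ∈ w.1) (c : ℤ) :
    prependMap P hcons a d (Finsupp.single w c) = 0 := by
  simp [prependMap, Finsupp.lsum_single, hm]

theorem eraseWord_consWord_zero {d : ℕ} (a : α) (w : Word P d) (hm : a ∉ w.1) :
    eraseWord P hP (consWord P hcons a w hm) (0 : Fin (d + 1)) = w :=
  Subtype.ext rfl

theorem not_mem_eraseWord {d : ℕ} {a : α} {w : Word P (d + 1)} (hm : a ∉ w.1) (k : Fin (d + 1)) :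
    a ∉ (eraseWord P hP w k).1 :=
  fun h => hm ((List.eraseIdx_sublist _ _).subset h)

theorem eraseWord_consWord_succ {d : ℕ} (a : α) (w : Word P (d + 1)) (hm : a ∉ w.1)
    (k : Fin (d + 1)) :
    eraseWord P hP (consWord P hcons a w hm) k.succ
      = consWord P hcons a (eraseWord P hP w k) (not_mem_eraseWord P hP hm k) :=
  Subtype.ext rfl

theorem boundary_prepend_zero (a : α) :
    (wordBoundary P hP 0).comp (prependMap P hcons a 0) = LinearMap.id := by
  apply Finsupp.lhom_ext
  intro w c
  have hm : a ∉ w.1 := by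
    have h0 : w.1 = [] := List.length_eq_zero_iff.1 w.2.2
    rw [h0]
    exact List.not_mem_nil
  rw [LinearMap.comp_apply, prependMap_single_of_not_mem P hcons hm, wordBoundary_single,
    Fin.sum_univ_one]
  simp [eraseWord_consWord_zero P hP hcons a w hm]

/-- The value on a basis word of the idempotent `id - ∂ h - h ∂`. -/
noncomputable def gword (a : α) (e : ℕ) (w : Word P (e + 1)) : Word P (e + 1) →₀ ℤ :=
  Finsupp.single w 1
    - wordBoundary P hP (e + 1) (prependMap P hcons a (e + 1) (Finsupp.single w 1))
    - prependMap P hcons a e (wordBoundary P hP e (Finsupp.single w 1))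

theorem gword_of_not_mem {a : α} {e : ℕ} {w : Word P (e + 1)} (hm : a ∉ w.1) :
    gword P hP hcons a e w = 0 := by
  rw [gword, prependMap_single_of_not_mem P hcons hm, wordBoundary_single, Fin.sum_univ_succ]
  rw [eraseWord_consWord_zero P hP hcons a w hm]
  rw [wordBoundary_single, map_sum]
  have hterm : ∀ k : Fin (e + 1),
      prependMap P hcons a e ((-1 : ℤ) ^ (k : ℕ) • Finsupp.single (eraseWord P hP w k) 1)
        = (-1 : ℤ) ^ (k : ℕ) •
          Finsupp.single (consWord P hcons a (eraseWord P hP w k)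
            (not_mem_eraseWord P hP hm k)) 1 := by
    intro k
    rw [map_smul, prependMap_single_of_not_mem P hcons (not_mem_eraseWord P hP hm k)]
  rw [Finset.sum_congr rfl fun k _ => hterm k]
  have hsign : ∀ k : Fin (e + 1),
      ((-1 : ℤ) ^ ((k.succ : Fin (e + 2)) : ℕ)) •
          Finsupp.single (eraseWord P hP (consWord P hcons a w hm) k.succ) (1 : ℤ)
        = -(((-1 : ℤ) ^ (k : ℕ)) •
          Finsupp.single (consWord P hcons a (eraseWord P hP w k)
            (not_mem_eraseWord P hP hm k)) 1) := by
    intro k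
    rw [eraseWord_consWord_succ P hP hcons a w hm k]
    have h1 : ((k.succ : Fin (e + 2)) : ℕ) = (k : ℕ) + 1 := rfl
    rw [h1, pow_succ]
    simp [neg_smul, mul_comm]
  rw [Finset.sum_congr rfl fun k _ => hsign k]
  simp only [Fin.val_zero, pow_zero, one_smul, Finset.sum_neg_distrib]
  abel

theorem perm_cons_eraseIdx {a : α} :
    ∀ (l : List α) (k : ℕ), a ∈ l → a ∉ l.eraseIdx k → (a :: l.eraseIdx k).Perm l := by
  intro l
  induction l with
  | nil => intro k h; simp at h
  | cons b t ih =>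
    intro k hmem hnot
    cases k with
    | zero =>
      simp only [List.eraseIdx_cons_zero] at hnot ⊢
      have : a = b := by
        rcases List.mem_cons.1 hmem with h | h
        · exact h
        · exact absurd h hnot
      rw [this]
    | succ m =>
      simp only [List.eraseIdx_cons_succ] at hnot ⊢
      have hab : a ≠ b := fun h => hnot (h ▸ List.mem_cons_self)
      have hat : a ∈ t := by
        rcases List.mem_cons.1 hmem with h | h
        · exact absurd h hab
        · exact h
      have hnt : a ∉ t.eraseIdx m := fun h => hnot (List.mem_cons_of_mem _ h)
      exact (List.Perm.swap b a _).trans ((ih m hat hnt).cons b)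

theorem gword_mem_supported {a : α} {e : ℕ} {w : Word P (e + 1)} (hm : a ∈ w.1) :
    gword P hP hcons a e w
      ∈ Finsupp.supported ℤ ℤ {v : Word P (e + 1) | v.1.Perm w.1} := by
  have h2 : wordBoundary P hP (e + 1) (prependMap P hcons a (e + 1) (Finsupp.single w 1))
      = 0 := by
    rw [prependMap_single_of_mem P hcons hm, map_zero]
  have hw : Finsupp.single w (1 : ℤ)
      ∈ Finsupp.supported ℤ ℤ {v : Word P (e + 1) | v.1.Perm w.1} :=
    Finsupp.single_mem_supported ℤ 1 (List.Perm.refl _)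
  rw [gword, h2, sub_zero]
  apply Submodule.sub_mem _ hw
  rw [wordBoundary_single, map_sum]
  apply Submodule.sum_mem
  intro k _
  rw [map_smul]
  apply Submodule.smul_mem
  by_cases hk : a ∈ (eraseWord P hP w k).1
  · rw [prependMap_single_of_mem P hcons hk]
    exact Submodule.zero_mem _
  · rw [prependMap_single_of_not_mem P hcons hk]
    exact Finsupp.single_mem_supported ℤ 1 (perm_cons_eraseIdx _ _ hm hk)

theorem sub_boundary_eq_sum_gword (a : α) (e : ℕ) (z : Word P (e + 1) →₀ ℤ)
    (hz : wordBoundary P hP e z = 0) :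
    z - wordBoundary P hP (e + 1) (prependMap P hcons a (e + 1) z)
      = ∑ w ∈ z.support, z w • gword P hP hcons a e w := by
  have h1 : ∑ w ∈ z.support, z w • Finsupp.single w (1 : ℤ) = z := by
    conv_rhs => rw [← Finsupp.sum_single z]
    rw [Finsupp.sum]
    exact Finset.sum_congr rfl fun w _ => by
      rw [Finsupp.smul_single, smul_eq_mul, mul_one]
  simp only [gword, smul_sub, Finset.sum_sub_distrib]
  simp only [← map_smul, ← map_sum, h1, hz, map_zero, sub_zero]

include hcons in
theorem step_lemma (a : α) (e : ℕ) (L : List α) (z : Word P (e + 1) →₀ ℤ)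
    (hzc : wordBoundary P hP e z = 0)
    (hzs : ∀ v ∈ z.support, ∀ b ∈ L, b ∈ v.1) :
    ∃ y z', z = wordBoundary P hP (e + 1) y + z' ∧ wordBoundary P hP e z' = 0 ∧
      ∀ v ∈ z'.support, ∀ b ∈ a :: L, b ∈ v.1 := by
  refine ⟨prependMap P hcons a (e + 1) z,
    z - wordBoundary P hP (e + 1) (prependMap P hcons a (e + 1) z), by abel, ?_, ?_⟩
  · rw [map_sub, hzc]
    have hdd : wordBoundary P hP e
        (wordBoundary P hP (e + 1) (prependMap P hcons a (e + 1) z)) = 0 :=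
      DFunLike.congr_fun (wordBoundary_comp_wordBoundary P hP e) _
    rw [hdd, sub_zero]
  · rw [sub_boundary_eq_sum_gword P hP hcons a e z hzc]
    have hmem : (∑ w ∈ z.support, z w • gword P hP hcons a e w)
        ∈ Finsupp.supported ℤ ℤ {v : Word P (e + 1) | ∀ b ∈ a :: L, b ∈ v.1} := by
      apply Submodule.sum_mem
      intro w hw
      apply Submodule.smul_mem
      by_cases hm : a ∈ w.1
      · apply Finsupp.supported_mono ?_ (gword_mem_supported P hP hcons hm)
        intro v hv b hb
        rcases List.mem_cons.1 hb with h | h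
        · exact hv.mem_iff.2 (h ▸ hm)
        · exact hv.mem_iff.2 (hzs w hw b h)
      · rw [gword_of_not_mem P hP hcons hm]
        exact Submodule.zero_mem _
    intro v hv
    exact (Finsupp.mem_supported ℤ _).1 hmem hv

include hcons in
theorem cycles_are_boundaries_succ (e : ℕ) (L : List α) (hL : L.Nodup)
    (hlen : e + 1 < L.length) (hall : ∀ b : α, b ∈ L) (z : Word P (e + 1) →₀ ℤ)
    (hzc : wordBoundary P hP e z = 0) :
    ∃ y, wordBoundary P hP (e + 1) y = z := by
  have key : ∀ T : List α, ∃ y z', z = wordBoundary P hP (e + 1) y + z' ∧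
      wordBoundary P hP e z' = 0 ∧ ∀ v ∈ z'.support, ∀ b ∈ T, b ∈ v.1 := by
    intro T
    induction T with
    | nil => exact ⟨0, z, by simp, hzc, fun v _ b hb => absurd hb List.not_mem_nil⟩
    | cons a T ih =>
      obtain ⟨y, z', h1, h2, h3⟩ := ih
      obtain ⟨y2, z'', g1, g2, g3⟩ := step_lemma P hP hcons a e T z' h2 h3
      exact ⟨y + y2, z'', by rw [h1, g1, map_add]; abel, g2, g3⟩
  obtain ⟨y, z', h1, _, h3⟩ := key L
  have hz' : z' = 0 := by
    ext v
    by_contra hv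
    have hv' : v ∈ z'.support := Finsupp.mem_support_iff.2 hv
    have hsub : L ⊆ v.1 := fun b hb => h3 v hv' b hb
    have hle : L.length ≤ v.1.length :=
      (List.subperm_of_subset hL hsub).length_le
    rw [v.2.2] at hle
    omega
  exact ⟨y, by rw [h1, hz', add_zero]⟩

include hcons in
theorem cycles_are_boundaries_zero (a : α) (z : Word P 0 →₀ ℤ) :
    ∃ y, wordBoundary P hP 0 y = z :=
  ⟨prependMap P hcons a 0 z, by
    have h := DFunLike.congr_fun (boundary_prepend_zero P hP hcons a) z
    simpa using h⟩

end Spherical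

theorem word_isEmpty (n d : ℕ) (hd : n < d) :
    IsEmpty (Word (fun l : List (Fin n) => l.Nodup) d) := by
  constructor
  intro w
  have h1 : w.1.length ≤ Fintype.card (Fin n) := w.2.1.length_le_card
  rw [Fintype.card_fin, w.2.2] at h1
  omega


/-- Homological sphericity of the complex of injective words: for `n ≥ 1`, the augmented
chain complex of injective words on `Fin n` (whose degree-`d` part is the free abelian
group on injective `d`-tuples, so that degree `d` corresponds to homological degree
`i = d - 1`, the empty word spanning the augmentation `ℤ` in degree `-1`) is exact in
every degree except `n`; i.e. the reduced homology `H̃_i` vanishes for `i ≠ n - 1`. -/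
theorem injectiveWordsComplex_spherical (n : ℕ) (hn : 1 ≤ n) (d : ℕ) (hd : d ≠ n) :
    Limits.IsZero ((wordComplex (fun l : List (Fin n) => l.Nodup)
      (fun l j h => (List.eraseIdx_sublist l j).nodup h)).homology d) := by
  have hcons : ∀ (a : Fin n) (l : List (Fin n)), l.Nodup → a ∉ l → (a :: l).Nodup :=
    fun a l h hm => List.nodup_cons.2 ⟨hm, h⟩
  rw [← HomologicalComplex.exactAt_iff_isZero_homology]
  have hdK : ∀ e : ℕ, (wordComplex (fun l : List (Fin n) => l.Nodup)
      (fun l j h => (List.eraseIdx_sublist l j).nodup h)).d (e + 1) e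
      = ModuleCat.ofHom (wordBoundary (fun l : List (Fin n) => l.Nodup)
        (fun l j h => (List.eraseIdx_sublist l j).nodup h) e) := by
    intro e
    exact ChainComplex.of_d (fun d => ModuleCat.of ℤ (Word (fun l : List (Fin n) => l.Nodup) d →₀ ℤ))
      (fun d => ModuleCat.ofHom (wordBoundary (fun l : List (Fin n) => l.Nodup)
        (fun l j h => (List.eraseIdx_sublist l j).nodup h) d)) e
  cases d with
  | zero =>
    rw [HomologicalComplex.exactAt_iff' _ _ _ _ (ChainComplex.prev ℕ 0)
      ChainComplex.next_nat_zero, ShortComplex.moduleCat_exact_iff]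
    intro x _
    obtain ⟨y, hy⟩ := cycles_are_boundaries_zero (fun l : List (Fin n) => l.Nodup)
      (fun l j h => (List.eraseIdx_sublist l j).nodup h) hcons ⟨0, hn⟩ x
    refine ⟨y, ?_⟩
    show ((wordComplex _ _).d 1 0) y = x
    rw [hdK 0]
    exact hy
  | succ e =>
    by_cases he : e + 1 < n
    · rw [HomologicalComplex.exactAt_iff' _ _ _ _ (ChainComplex.prev ℕ (e + 1))
        (ChainComplex.next_nat_succ e), ShortComplex.moduleCat_exact_iff]
      intro x hx
      have hcyc : wordBoundary (fun l : List (Fin n) => l.Nodup)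
          (fun l j h => (List.eraseIdx_sublist l j).nodup h) e x = 0 := by
        have h0 : ((wordComplex _ _).d (e + 1) e) x = 0 := hx
        rw [hdK e] at h0
        exact h0
      obtain ⟨y, hy⟩ := cycles_are_boundaries_succ (fun l : List (Fin n) => l.Nodup)
        (fun l j h => (List.eraseIdx_sublist l j).nodup h) hcons e (List.finRange n)
        (List.nodup_finRange n) (by simpa using he) (fun b => List.mem_finRange b) x hcyc
      refine ⟨y, ?_⟩
      show ((wordComplex _ _).d (e + 2) (e + 1)) y = x
      rw [hdK (e + 1)]
      exact hy
    · rw [HomologicalComplex.exactAt_iff]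
      apply CategoryTheory.ShortComplex.exact_of_isZero_X₂
      have hempty : IsEmpty (Word (fun l : List (Fin n) => l.Nodup) (e + 1)) :=
        word_isEmpty n (e + 1) (by omega)
      have hsub : Subsingleton ((Word (fun l : List (Fin n) => l.Nodup) (e + 1)) →₀ ℤ) := by
        constructor
        intro f g
        ext v
        exact hempty.elim v
      exact ModuleCat.isZero_of_subsingleton
        (ModuleCat.of ℤ ((Word (fun l : List (Fin n) => l.Nodup) (e + 1)) →₀ ℤ))
end

section
/- For every n ≥ 1, the complex of signed injective words on n letters is (n−1)-spherical: the augmented chain complex whose i-th term (for 0 ≤ i ≤ n−1) is the free abelian group on the set of (i+1)-tuples ((a_0, ε_0), …, (a_i, ε_i)) of elements of Fin n × ZMod 2 whose first coordinates a_0, …, a_i are pairwise distinct, with boundary map given by the alternating sum of deleting one entry, and with augmentation sending each 1-tuple to 1 ∈ ℤ in degree −1, is exact in every degree except n−1; that is, its reduced homology H̃_i vanishes for all i ≠ n−1. -/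
open CategoryTheory

variable {α : Type} (P : List α → Prop) (hP : ∀ (l : List α) (j : ℕ), P l → P (l.eraseIdx j))

/-! ### Auxiliary development for the sphericity theorem -/

section SignedAux

open Finsupp

variable {n : ℕ}

private abbrev Pw (n : ℕ) : List (Fin n × ZMod 2) → Prop := fun l => (l.map Prod.fst).Nodup

private theorem hPw (n : ℕ) : ∀ (l : List (Fin n × ZMod 2)) (j : ℕ), Pw n l → Pw n (l.eraseIdx j) :=
  fun l j h => ((List.eraseIdx_sublist l j).map Prod.fst).nodup h

private abbrev Wd (n m : ℕ) := Word (Pw n) m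

/-- Generic: two linear maps agree on a finsupp whose support satisfies `p`,
provided they agree on singles satisfying `p`. -/
private theorem congr_support {α : Type} {V : Type*} [AddCommMonoid V] [Module ℤ V]
    (g₁ g₂ : (α →₀ ℤ) →ₗ[ℤ] V) (p : α → Prop)
    (h : ∀ l b, p l → g₁ (Finsupp.single l b) = g₂ (Finsupp.single l b)) :
    ∀ z : α →₀ ℤ, (∀ l ∈ z.support, p l) → g₁ z = g₂ z := by
  intro z
  induction z using Finsupp.induction with
  | zero => intro _; simp
  | single_add a b f haf hb ih =>
    intro hsupp
    have hpa : p a := by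
      apply hsupp
      rw [Finsupp.mem_support_iff, Finsupp.add_apply, Finsupp.single_eq_same]
      rw [Finsupp.notMem_support_iff] at haf
      rw [haf, add_zero]
      exact hb
    have hpf : ∀ l ∈ f.support, p l := by
      intro l hl
      apply hsupp
      have hla : l ≠ a := by rintro rfl; exact haf hl
      rw [Finsupp.mem_support_iff, Finsupp.add_apply, Finsupp.single_eq_of_ne hla, zero_add]
      exact Finsupp.mem_support_iff.mp hl
    rw [map_add, map_add, h a b hpa, ih hpf]

/-- Projection onto the span of basis elements satisfying `p`. -/
noncomputable def projP {α : Type} (p : α → Prop) [DecidablePred p] :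
    (α →₀ ℤ) →ₗ[ℤ] (α →₀ ℤ) :=
  Finsupp.lsum ℤ fun l => if p l then Finsupp.lsingle l else 0

private theorem projP_single {α : Type} (p : α → Prop) [DecidablePred p] (l : α) (b : ℤ) :
    projP p (Finsupp.single l b) = if p l then Finsupp.single l b else 0 := by
  rw [projP, Finsupp.lsum_single]
  split_ifs with h <;> simp [Finsupp.lsingle_apply]

private theorem projP_support {α : Type} (p : α → Prop) [DecidablePred p] (z : α →₀ ℤ) :
    ∀ v ∈ (projP p z).support, p v ∧ v ∈ z.support := by
  classical
  intro v hv
  rw [projP, Finsupp.lsum_apply] at hv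
  have hv' := Finsupp.support_sum hv
  rw [Finset.mem_biUnion] at hv'
  obtain ⟨l, hl, hvl⟩ := hv'
  by_cases hpl : p l
  · rw [if_pos hpl] at hvl
    simp only [Finsupp.lsingle_apply] at hvl
    have := Finsupp.support_single_subset hvl
    rw [Finset.mem_singleton] at this
    subst this
    exact ⟨hpl, hl⟩
  · rw [if_neg hpl] at hvl
    simp at hvl

/-! ### The classes of words relative to a letter `a` -/

def contW {m : ℕ} (a : Fin n) (ε : ZMod 2) (l : Wd n m) : Prop := (a, ε) ∈ l.1

def afreeW {m : ℕ} (a : Fin n) (l : Wd n m) : Prop := a ∉ l.1.map Prod.fst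

instance {m : ℕ} (a : Fin n) (ε : ZMod 2) : DecidablePred (contW (m := m) a ε) :=
  fun l => inferInstanceAs (Decidable ((a, ε) ∈ l.1))

instance {m : ℕ} (a : Fin n) : DecidablePred (afreeW (m := m) a) :=
  fun l => inferInstanceAs (Decidable (a ∉ l.1.map Prod.fst))

private theorem zmod2_add_one_ne (ε : ZMod 2) : ε ≠ ε + 1 := by revert ε; decide

private theorem zmod2_add_one_add_one (ε : ZMod 2) : ε + 1 + 1 = ε := by revert ε; decide

private theorem zmod2_eq_or (δ ε : ZMod 2) : δ = ε ∨ δ = ε + 1 := by revert δ ε; decide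

private theorem contW_unique {m : ℕ} {a : Fin n} {ε ε' : ZMod 2} {l : Wd n m}
    (h : contW a ε l) (h' : contW a ε' l) : ε = ε' := by
  have := List.inj_on_of_nodup_map l.2.1 h h' rfl
  exact congrArg Prod.snd this

private theorem contW_not_other {m : ℕ} {a : Fin n} {ε : ZMod 2} {l : Wd n m}
    (h : contW a ε l) : ¬ contW a (ε + 1) l :=
  fun h' => zmod2_add_one_ne ε (contW_unique h h')

private theorem contW_not_afree {m : ℕ} {a : Fin n} {ε : ZMod 2} {l : Wd n m}
    (h : contW a ε l) : ¬ afreeW a l :=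
  fun h' => h' (List.mem_map_of_mem (f := Prod.fst) h)

private theorem not_afree_cont {m : ℕ} {a : Fin n} {l : Wd n m}
    (h : ¬ afreeW a l) : ∃ ε, contW a ε l := by
  rw [afreeW, not_not] at h
  obtain ⟨x, hx, hxa⟩ := List.mem_map.mp h
  exact ⟨x.2, by rwa [contW, ← hxa]⟩

/-- Partition of a chain into the three classes: contains `(a,ε)`, contains `(a,ε+1)`,
or avoids the coordinate `a`. -/
private theorem projP_partition {m : ℕ} (a : Fin n) (ε : ZMod 2) (z : Wd n m →₀ ℤ) :
    z = projP (contW a ε) z + projP (contW a (ε+1)) z + projP (afreeW a) z := by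
  have := congr_support (α := Wd n m) LinearMap.id
    (projP (contW a ε) + projP (contW a (ε+1)) + projP (afreeW a)) (fun _ => True) ?_ z
    (fun _ _ => trivial)
  · simpa using this
  · intro l b _
    simp only [LinearMap.id_apply, LinearMap.add_apply, projP_single]
    by_cases hf : afreeW a l
    · rw [if_pos hf, if_neg (fun h => contW_not_afree h hf),
        if_neg (fun h => contW_not_afree h hf)]
      simp
    · obtain ⟨δ, hδ⟩ := not_afree_cont hf
      rcases zmod2_eq_or δ ε with rfl | rfl
      · rw [if_pos hδ, if_neg (contW_not_other hδ), if_neg (fun h => contW_not_afree hδ h)]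
        simp
      · rw [if_pos hδ, if_neg (fun h => contW_not_other hδ (by rwa [zmod2_add_one_add_one])),
          if_neg (fun h => contW_not_afree hδ h)]
        simp

/-! ### The boundary map with frozen coordinates -/

/-- Sign coefficient of deleting entry `j`, zero if the coordinate there is frozen. -/
def coefF (Fc : Finset (Fin n)) (w : List (Fin n × ZMod 2)) (j : ℕ) : ℤ :=
  (w[j]?).elim 0 (fun x => if x.1 ∈ Fc then 0 else (-1)^j)

private theorem coefF_some {Fc : Finset (Fin n)} {w : List (Fin n × ZMod 2)} {j : ℕ}
    {x : Fin n × ZMod 2} (h : w[j]? = some x) :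
    coefF Fc w j = if x.1 ∈ Fc then 0 else (-1)^j := by
  rw [coefF, h, Option.elim_some]

private theorem coefF_lt {Fc : Finset (Fin n)} {w : List (Fin n × ZMod 2)} {j : ℕ}
    (h : j < w.length) :
    coefF Fc w j = if (w[j]).1 ∈ Fc then 0 else (-1)^j :=
  coefF_some (List.getElem?_eq_getElem h)

private theorem coefF_empty {w : List (Fin n × ZMod 2)} {j : ℕ} (h : j < w.length) :
    coefF (∅ : Finset (Fin n)) w j = (-1)^j := by
  rw [coefF_lt h, if_neg (Finset.notMem_empty _)]

private theorem coefF_ne_zero {Fc : Finset (Fin n)} {w : List (Fin n × ZMod 2)} {j : ℕ}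
    (h : coefF Fc w j ≠ 0) : ∃ hj : j < w.length, (w[j]).1 ∉ Fc := by
  by_cases hj : j < w.length
  · refine ⟨hj, ?_⟩
    rw [coefF_lt hj] at h
    intro hmem
    rw [if_pos hmem] at h
    exact h rfl
  · exfalso
    apply h
    rw [coefF, List.getElem?_eq_none (by omega), Option.elim_none]

private theorem coefF_cons {Fc : Finset (Fin n)} (x : Fin n × ZMod 2)
    (w : List (Fin n × ZMod 2)) (i : ℕ) :
    coefF Fc (x :: w) (i + 1) = - coefF Fc w i := by
  rcases h : w[i]? with _ | y
  · rw [coefF, List.getElem?_cons_succ, h, Option.elim_none, coefF, h, Option.elim_none, neg_zero]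
  · rw [coefF, List.getElem?_cons_succ, h, Option.elim_some, coefF, h, Option.elim_some]
    split_ifs with hy
    · rw [neg_zero]
    · rw [pow_succ]; ring

private theorem coefF_cancel {Fc : Finset (Fin n)} (w : List (Fin n × ZMod 2))
    {i j : ℕ} (hij : i < j) :
    coefF Fc w j * coefF Fc (w.eraseIdx j) i
      + coefF Fc w i * coefF Fc (w.eraseIdx i) (j - 1) = 0 := by
  obtain ⟨m, rfl⟩ : ∃ m, j = m + 1 := ⟨j - 1, by omega⟩
  have h1 : (w.eraseIdx (m+1))[i]? = w[i]? := by
    rw [List.getElem?_eraseIdx, if_pos (by omega)]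
  have h2 : (w.eraseIdx i)[m]? = w[m+1]? := by
    rw [List.getElem?_eraseIdx, if_neg (by omega)]
  simp only [Nat.add_sub_cancel]
  rcases hwi : w[i]? with _ | x <;> rcases hwj : w[m+1]? with _ | y <;>
      simp only [coefF, h1, h2, hwi, hwj, Option.elim_none, Option.elim_some] <;>
      (try split_ifs) <;> ring

/-- The boundary map deleting only entries whose coordinate is not in `Fc`. -/
noncomputable def bF (Fc : Finset (Fin n)) (d : ℕ) :
    (Wd n (d+1) →₀ ℤ) →ₗ[ℤ] (Wd n d →₀ ℤ) :=
  Finsupp.lsum ℤ fun l =>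
    ∑ j : Fin (d + 1), coefF Fc l.1 j • Finsupp.lsingle (eraseWord (Pw n) (hPw n) l j)

theorem bF_single {Fc : Finset (Fin n)} {d : ℕ} (l : Wd n (d+1)) (b : ℤ) :
    bF Fc d (Finsupp.single l b)
      = ∑ j : Fin (d + 1), coefF Fc l.1 j • Finsupp.single (eraseWord (Pw n) (hPw n) l j) b := by
  simp [bF, Finsupp.lsum_single, LinearMap.sum_apply, LinearMap.smul_apply,
    Finsupp.lsingle_apply]

theorem bF_empty (d : ℕ) : bF (∅ : Finset (Fin n)) d = wordBoundary (Pw n) (hPw n) d := by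
  apply Finsupp.lhom_ext
  intro l b
  rw [bF_single, wordBoundary_single]
  refine Finset.sum_congr rfl fun j _ => ?_
  rw [coefF_empty (by rw [l.2.2]; exact j.isLt)]

theorem bF_comp_bF (Fc : Finset (Fin n)) (d : ℕ) :
    (bF Fc d).comp (bF Fc (d + 1)) = 0 := by
  apply Finsupp.lhom_ext
  intro l b
  rw [LinearMap.comp_apply, bF_single, map_sum, LinearMap.zero_apply]
  set f : Fin (d + 2) × Fin (d + 1) → (Wd n d →₀ ℤ) := fun p =>
    (coefF Fc l.1 p.1 * coefF Fc (l.1.eraseIdx p.1) p.2) •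
      Finsupp.single (eraseWord (Pw n) (hPw n) (eraseWord (Pw n) (hPw n) l p.1) p.2) b with hf
  have step : ∀ j : Fin (d + 2),
      bF Fc d (coefF Fc l.1 j • Finsupp.single (eraseWord (Pw n) (hPw n) l j) b)
        = ∑ i : Fin (d + 1), f (j, i) := by
    intro j
    simp only [hf]
    rw [map_smul, bF_single, Finset.smul_sum]
    exact Finset.sum_congr rfl fun i _ => smul_smul _ _ _
  rw [Finset.sum_congr rfl (fun j _ => step j), ← Fintype.sum_prod_type]
  apply Finset.sum_ninvolution (deletionInvolution d)
  · rintro ⟨j, i⟩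
    by_cases h : (i : ℕ) < (j : ℕ)
    · rw [deletionInvolution_of_lt h]
      simp only [hf]
      have hword : eraseWord (Pw n) (hPw n) (eraseWord (Pw n) (hPw n) l ⟨(i : ℕ), by have := i.2; omega⟩)
            ⟨(j : ℕ) - 1, by have := j.2; omega⟩
          = eraseWord (Pw n) (hPw n) (eraseWord (Pw n) (hPw n) l j) i := by
        apply Subtype.ext
        show (l.1.eraseIdx (i : ℕ)).eraseIdx ((j : ℕ) - 1) = (l.1.eraseIdx (j : ℕ)).eraseIdx i
        rw [eraseIdx_eraseIdx_comm l.1 (i : ℕ) ((j : ℕ) - 1) (by omega)]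
        congr 2
        omega
      rw [hword, ← add_smul]
      rw [coefF_cancel l.1 h, zero_smul]
    · rw [deletionInvolution_of_ge h]
      simp only [hf]
      have hword : eraseWord (Pw n) (hPw n) (eraseWord (Pw n) (hPw n) l ⟨(i : ℕ) + 1, by have := i.2; omega⟩)
            ⟨(j : ℕ), by have := i.2; omega⟩
          = eraseWord (Pw n) (hPw n) (eraseWord (Pw n) (hPw n) l j) i := by
        apply Subtype.ext
        show (l.1.eraseIdx ((i : ℕ) + 1)).eraseIdx (j : ℕ) = (l.1.eraseIdx (j : ℕ)).eraseIdx i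
        rw [← eraseIdx_eraseIdx_comm l.1 (j : ℕ) (i : ℕ) (by omega)]
      rw [hword, ← add_smul, add_comm]
      have := coefF_cancel (Fc := Fc) l.1 (i := (j : ℕ)) (j := (i : ℕ) + 1) (by omega)
      rw [Nat.add_sub_cancel] at this
      rw [this, zero_smul]
  · rintro ⟨j, i⟩ _
    by_cases h : (i : ℕ) < (j : ℕ)
    · rw [deletionInvolution_of_lt h]
      intro hcon
      have h1 : (i : ℕ) = (j : ℕ) :=
        congrArg (fun q : Fin (d + 2) × Fin (d + 1) => (q.1 : ℕ)) hcon
      omega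
    · rw [deletionInvolution_of_ge h]
      intro hcon
      have h1 : (i : ℕ) + 1 = (j : ℕ) :=
        congrArg (fun q : Fin (d + 2) × Fin (d + 1) => (q.1 : ℕ)) hcon
      have h2 : (j : ℕ) = (i : ℕ) :=
        congrArg (fun q : Fin (d + 2) × Fin (d + 1) => (q.2 : ℕ)) hcon
      omega
  · intro a; exact Finset.mem_univ _
  · rintro ⟨j, i⟩
    by_cases h : (i : ℕ) < (j : ℕ)
    · rw [deletionInvolution_of_lt h, deletionInvolution_of_ge (by simp; omega)]
      apply Prod.ext
      · apply Fin.ext; simp; omega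
      · apply Fin.ext; simp
    · rw [deletionInvolution_of_ge h, deletionInvolution_of_lt (by simp; omega)]
      apply Prod.ext
      · apply Fin.ext; simp
      · apply Fin.ext; simp

/-- The boundary map, defined in every degree (zero map in degree `0`). -/
noncomputable def delF (Fc : Finset (Fin n)) : ∀ m, (Wd n m →₀ ℤ) →ₗ[ℤ] (Wd n (m-1) →₀ ℤ)
  | 0 => 0
  | (d+1) => bF Fc d

theorem delF_bF (Fc : Finset (Fin n)) (m : ℕ) (y : Wd n (m+1) →₀ ℤ) :
    delF Fc m (bF Fc m y) = 0 := by
  cases m with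
  | zero => simp [delF]
  | succ d => exact DFunLike.congr_fun (bF_comp_bF Fc d) y

theorem bF_support {Fc : Finset (Fin n)} {d : ℕ} (z : Wd n (d+1) →₀ ℤ) :
    ∀ v ∈ (bF Fc d z).support, ∃ l ∈ z.support, ∃ j : Fin (d+1),
      coefF Fc l.1 j ≠ 0 ∧ v = eraseWord (Pw n) (hPw n) l j := by
  classical
  intro v hv
  rw [bF, Finsupp.lsum_apply] at hv
  have hv' := Finsupp.support_sum hv
  rw [Finset.mem_biUnion] at hv'
  obtain ⟨l, hl, hvl⟩ := hv'
  refine ⟨l, hl, ?_⟩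
  simp only [LinearMap.sum_apply] at hvl
  obtain ⟨j, _, hj⟩ := Finsupp.mem_support_finset_sum v hvl
  simp only [LinearMap.smul_apply, Finsupp.lsingle_apply, Finsupp.smul_single] at hj
  have h1 := Finsupp.support_single_subset hj
  rw [Finset.mem_singleton] at h1
  subst h1
  refine ⟨j, ?_, rfl⟩
  intro hc
  rw [hc, zero_smul] at hj
  simp at hj

/-! ### Admissible words relative to free and frozen letters -/

/-- `l` uses only letters with coordinate in `S` or frozen letters in `F`,
and contains every frozen letter. -/
def okW {m : ℕ} (S : Finset (Fin n)) (F : Finset (Fin n × ZMod 2)) (l : Wd n m) : Prop :=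
  (∀ x ∈ l.1, x.1 ∈ S ∨ x ∈ F) ∧ (∀ x ∈ F, x ∈ l.1)

private theorem mem_eraseIdx_of_ne {γ : Type*} {x : γ} {l : List γ} {j : ℕ}
    (hx : x ∈ l) (hj : j < l.length) (hne : x ≠ l[j]) : x ∈ l.eraseIdx j := by
  obtain ⟨i, hi, hieq⟩ := List.getElem_of_mem hx
  rw [List.mem_eraseIdx_iff_getElem]
  exact ⟨i, hi, fun h => hne (by subst h; rw [hieq]), hieq⟩

private theorem not_mem_eraseIdx_self {γ : Type*} {l : List γ} (hl : l.Nodup) {j : ℕ}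
    (hj : j < l.length) : l[j] ∉ l.eraseIdx j := by
  intro hmem
  rw [List.mem_eraseIdx_iff_getElem] at hmem
  obtain ⟨i, hi, hij, hieq⟩ := hmem
  exact hij ((hl.getElem_inj_iff).mp hieq)

private theorem okW_eraseWord {m : ℕ} {S : Finset (Fin n)} {F : Finset (Fin n × ZMod 2)}
    {l : Wd n (m+1)} (hl : okW S F l) {j : Fin (m+1)}
    (hc : coefF (F.image Prod.fst) l.1 j ≠ 0) :
    okW S F (eraseWord (Pw n) (hPw n) l j) := by
  obtain ⟨hj, hfree⟩ := coefF_ne_zero hc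
  constructor
  · intro x hx
    exact hl.1 x ((List.eraseIdx_sublist l.1 j).subset hx)
  · intro f hf
    have hfl : f ∈ l.1 := hl.2 f hf
    have hne : f ≠ l.1[(j : ℕ)] := by
      intro h
      exact hfree (h ▸ Finset.mem_image_of_mem Prod.fst hf)
    exact mem_eraseIdx_of_ne hfl hj hne

private theorem bF_support_okW {S : Finset (Fin n)} {F : Finset (Fin n × ZMod 2)} {d : ℕ}
    {z : Wd n (d+1) →₀ ℤ} (hz : ∀ l ∈ z.support, okW S F l) :
    ∀ v ∈ (bF (F.image Prod.fst) d z).support, okW S F v := by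
  intro v hv
  obtain ⟨l, hl, j, hc, rfl⟩ := bF_support z v hv
  exact okW_eraseWord (hz l hl) hc

private theorem okW_mono {m : ℕ} {S : Finset (Fin n)} {F : Finset (Fin n × ZMod 2)}
    {a : Fin n} {ε : ZMod 2} (ha : a ∈ S) {l : Wd n m}
    (h : okW (S.erase a) (insert (a, ε) F) l) : okW S F l := by
  constructor
  · intro x hx
    rcases h.1 x hx with hxS | hxF
    · exact Or.inl (Finset.mem_of_mem_erase hxS)
    · rcases Finset.mem_insert.mp hxF with rfl | hxF
      · exact Or.inl ha
      · exact Or.inr hxF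
  · intro f hf
    exact h.2 f (Finset.mem_insert_of_mem hf)

/-! ### Interaction of the projections with the boundary -/

private theorem projP_bF_cont {Fc : Finset (Fin n)} {a : Fin n} (ha : a ∉ Fc)
    (ε : ZMod 2) (d : ℕ) (z : Wd n (d+1) →₀ ℤ)
    (hz : ∀ l ∈ z.support, contW a ε l) :
    projP (contW a ε) (bF Fc d z) = bF (insert a Fc) d z := by
  refine congr_support ((projP (contW a ε)).comp (bF Fc d)) (bF (insert a Fc) d)
    (contW a ε) ?_ z hz
  intro l b hl
  rw [LinearMap.comp_apply, bF_single, map_sum, bF_single]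
  refine Finset.sum_congr rfl fun j _ => ?_
  have hjlt : (j : ℕ) < l.1.length := by rw [l.2.2]; exact j.isLt
  rw [map_smul, projP_single]
  by_cases hja : (l.1[(j : ℕ)]).1 = a
  · -- the deleted entry is the `a`-letter, both sides vanish
    have hlj : l.1[(j : ℕ)] = (a, ε) := by
      have := List.inj_on_of_nodup_map l.2.1 (List.getElem_mem hjlt) hl
      exact this (by rw [hja])
    have hnc : ¬ contW a ε (eraseWord (Pw n) (hPw n) l j) := by
      intro hc
      have := not_mem_eraseIdx_self (l.2.1.of_map Prod.fst) hjlt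
      rw [hlj] at this
      exact this hc
    rw [if_neg hnc, smul_zero, coefF_lt hjlt, if_pos (by rw [hja]; exact Finset.mem_insert_self a Fc),
      zero_smul]
  · -- the deleted entry is not the `a`-letter
    have hc : contW a ε (eraseWord (Pw n) (hPw n) l j) := by
      refine mem_eraseIdx_of_ne hl hjlt ?_
      intro h
      exact hja (by rw [← h])
    rw [if_pos hc, coefF_lt hjlt, coefF_lt hjlt]
    have hiff : (l.1[(j : ℕ)]).1 ∈ insert a Fc ↔ (l.1[(j : ℕ)]).1 ∈ Fc := by
      simp [Finset.mem_insert, hja]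
    simp only [hiff]

private theorem projP_bF_ncont {Fc : Finset (Fin n)} {a : Fin n}
    (ε : ZMod 2) (d : ℕ) (z : Wd n (d+1) →₀ ℤ)
    (hz : ∀ l ∈ z.support, ¬ contW a ε l) :
    projP (contW a ε) (bF Fc d z) = 0 := by
  refine congr_support ((projP (contW a ε)).comp (bF Fc d)) 0
    (fun l => ¬ contW a ε l) ?_ z hz
  intro l b hl
  rw [LinearMap.comp_apply, bF_single, map_sum, LinearMap.zero_apply]
  refine Finset.sum_eq_zero fun j _ => ?_
  rw [map_smul, projP_single, if_neg, smul_zero]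
  intro hc
  exact hl ((List.eraseIdx_sublist l.1 j).subset hc)

/-! ### The cone operator: prepending the letter `(a, 0)` -/

def consW {m : ℕ} (a : Fin n) (l : Wd n m) (h : afreeW a l) : Wd n (m+1) :=
  ⟨(a, 0) :: l.1, ⟨by
      rw [Pw, List.map_cons, List.nodup_cons]
      exact ⟨h, l.2.1⟩, by rw [List.length_cons, l.2.2]⟩⟩

noncomputable def prepA (a : Fin n) (m : ℕ) : (Wd n m →₀ ℤ) →ₗ[ℤ] (Wd n (m+1) →₀ ℤ) :=
  Finsupp.lsum ℤ fun l =>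
    if h : afreeW a l then Finsupp.lsingle (consW a l h) else 0

private theorem prepA_single {a : Fin n} {m : ℕ} (l : Wd n m) (h : afreeW a l) (b : ℤ) :
    prepA a m (Finsupp.single l b) = Finsupp.single (consW a l h) b := by
  rw [prepA, Finsupp.lsum_single, dif_pos h, Finsupp.lsingle_apply]

private theorem prepA_support {a : Fin n} {m : ℕ} (z : Wd n m →₀ ℤ) :
    ∀ v ∈ (prepA a m z).support, ∃ l ∈ z.support, ∃ h : afreeW a l, v = consW a l h := by
  classical
  intro v hv
  rw [prepA, Finsupp.lsum_apply] at hv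
  have hv' := Finsupp.support_sum hv
  rw [Finset.mem_biUnion] at hv'
  obtain ⟨l, hl, hvl⟩ := hv'
  by_cases h : afreeW a l
  · rw [dif_pos h] at hvl
    simp only [Finsupp.lsingle_apply] at hvl
    have := Finsupp.support_single_subset hvl
    rw [Finset.mem_singleton] at this
    exact ⟨l, hl, h, this⟩
  · rw [dif_neg h] at hvl
    simp at hvl

private theorem afreeW_eraseWord {a : Fin n} {m : ℕ} {l : Wd n (m+1)} (h : afreeW a l)
    (j : Fin (m+1)) : afreeW a (eraseWord (Pw n) (hPw n) l j) := by
  intro hc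
  exact h (((List.eraseIdx_sublist l.1 j).map Prod.fst).subset hc)

private theorem cone_zero {Fc : Finset (Fin n)} {a : Fin n} (ha : a ∉ Fc)
    (z : Wd n 0 →₀ ℤ) : bF Fc 0 (prepA a 0 z) = z := by
  refine congr_support ((bF Fc 0).comp (prepA a 0)) LinearMap.id (fun _ => True) ?_ z
    (fun _ _ => trivial)
  intro l b _
  have hnil : l.1 = [] := List.length_eq_zero_iff.mp l.2.2
  have hfree : afreeW a l := by rw [afreeW, hnil]; simp
  rw [LinearMap.comp_apply, LinearMap.id_apply, prepA_single l hfree, bF_single,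
    Fin.sum_univ_one]
  have h0 : coefF Fc (consW a l hfree).1 (((0 : Fin 1)) : ℕ) = 1 := by
    show coefF Fc ((a, (0 : ZMod 2)) :: l.1) 0 = 1
    rw [coefF_lt (by simp), List.getElem_cons_zero, if_neg ha, pow_zero]
  have herase : eraseWord (Pw n) (hPw n) (consW a l hfree) 0 = l := by
    apply Subtype.ext
    show ((a, (0:ZMod 2)) :: l.1).eraseIdx 0 = l.1
    rw [List.eraseIdx_cons_zero]
  rw [herase, h0, one_smul]

private theorem cone_succ {Fc : Finset (Fin n)} {a : Fin n} (ha : a ∉ Fc) (d : ℕ)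
    (z : Wd n (d+1) →₀ ℤ) (hz : ∀ l ∈ z.support, afreeW a l) :
    bF Fc (d+1) (prepA a (d+1) z) = z - prepA a d (bF Fc d z) := by
  refine congr_support ((bF Fc (d+1)).comp (prepA a (d+1)))
    (LinearMap.id - (prepA a d).comp (bF Fc d)) (afreeW a) ?_ z hz
  intro l b hl
  rw [LinearMap.comp_apply, prepA_single l hl, bF_single, LinearMap.sub_apply,
    LinearMap.id_apply, LinearMap.comp_apply, bF_single, map_sum, Fin.sum_univ_succ]
  have h0 : coefF Fc (consW a l hl).1 (((0 : Fin (d+2))) : ℕ) = 1 := by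
    show coefF Fc ((a, (0 : ZMod 2)) :: l.1) 0 = 1
    rw [coefF_lt (by simp), List.getElem_cons_zero, if_neg ha, pow_zero]
  have herase : eraseWord (Pw n) (hPw n) (consW a l hl) (0 : Fin (d+2)) = l := by
    apply Subtype.ext
    show ((a, (0:ZMod 2)) :: l.1).eraseIdx 0 = l.1
    rw [List.eraseIdx_cons_zero]
  rw [herase, h0, one_smul, sub_eq_add_neg, ← Finset.sum_neg_distrib]
  congr 1
  refine Finset.sum_congr rfl fun i _ => ?_
  have hcoef : coefF Fc (consW a l hl).1 ((i.succ : Fin (d+2)) : ℕ) = - coefF Fc l.1 i := by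
    show coefF Fc ((a, (0:ZMod 2)) :: l.1) ((i : ℕ) + 1) = - coefF Fc l.1 i
    exact coefF_cons _ _ _
  have herase2 : eraseWord (Pw n) (hPw n) (consW a l hl) i.succ
      = consW a (eraseWord (Pw n) (hPw n) l i) (afreeW_eraseWord hl i) := by
    apply Subtype.ext
    show ((a, (0:ZMod 2)) :: l.1).eraseIdx ((i : ℕ) + 1) = (a, (0:ZMod 2)) :: l.1.eraseIdx i
    rw [List.eraseIdx_cons_succ]
  rw [map_smul, prepA_single _ (afreeW_eraseWord hl i), hcoef, herase2, neg_smul]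

/-! ### The main induction -/

private theorem mainEmpty {S : Finset (Fin n)} {F : Finset (Fin n × ZMod 2)} (hS : S = ∅)
    {m : ℕ} (hm : m < S.card + F.card) (z : Wd n m →₀ ℤ)
    (hsupp : ∀ l ∈ z.support, okW S F l) :
    z = 0 := by
  classical
  rw [← Finsupp.support_eq_empty, Finset.eq_empty_iff_forall_notMem]
  intro l hl
  have hok := hsupp l hl
  have hsub : F ⊆ l.1.toFinset := fun f hf => List.mem_toFinset.mpr (hok.2 f hf)
  have h1 := Finset.card_le_card hsub
  have h2 := List.toFinset_card_le l.1
  rw [l.2.2] at h2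
  rw [hS, Finset.card_empty] at hm
  omega

private theorem mainStep (n : ℕ) : ∀ (k : ℕ) (S : Finset (Fin n)) (F : Finset (Fin n × ZMod 2)),
    S.card ≤ k →
    (∀ x ∈ F, ∀ y ∈ F, x.1 = y.1 → x = y) →
    (∀ x ∈ F, x.1 ∉ S) →
    ∀ (m : ℕ) (z : Wd n m →₀ ℤ), m < S.card + F.card →
      (∀ l ∈ z.support, okW S F l) →
      delF (F.image Prod.fst) m z = 0 →
      ∃ y : Wd n (m+1) →₀ ℤ, (∀ l ∈ y.support, okW S F l) ∧ bF (F.image Prod.fst) m y = z := by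
  classical
  intro k
  induction k with
  | zero =>
    intro S F hk hinj hdis m z hm hsupp hcyc
    have hS : S = ∅ := Finset.card_eq_zero.mp (Nat.le_zero.mp hk)
    exact ⟨0, by simp, by rw [map_zero, mainEmpty hS hm z hsupp]⟩
  | succ k ih =>
    intro S F hk hinj hdis m z hm hsupp hcyc
    by_cases hS : S = ∅
    · exact ⟨0, by simp, by rw [map_zero, mainEmpty hS hm z hsupp]⟩
    obtain ⟨a, ha⟩ := Finset.nonempty_iff_ne_empty.mpr hS
    set Fc := F.image Prod.fst with hFc
    have haFc : a ∉ Fc := by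
      intro hmem
      obtain ⟨x, hx, hxa⟩ := Finset.mem_image.mp hmem
      exact hdis x hx (hxa ▸ ha)
    -- For each sign `ε`, find a chain of `(a,ε)`-words bounding the `(a,ε)`-part of `z`.
    have key : ∀ ε : ZMod 2, ∃ yε : Wd n (m+1) →₀ ℤ,
        (∀ l ∈ yε.support, okW S F l ∧ contW a ε l) ∧
        bF (insert a Fc) m yε = projP (contW a ε) z := by
      intro ε
      have hsuppε : ∀ l ∈ (projP (contW a ε) z).support, okW S F l ∧ contW a ε l := by
        intro l hl
        obtain ⟨h1, h2⟩ := projP_support _ z l hl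
        exact ⟨hsupp l h2, h1⟩
      have hsuppε' : ∀ l ∈ (projP (contW a ε) z).support,
          okW (S.erase a) (insert (a, ε) F) l := by
        intro l hl
        obtain ⟨hok, hcont⟩ := hsuppε l hl
        constructor
        · intro x hx
          rcases hok.1 x hx with hxS | hxF
          · by_cases hxa : x.1 = a
            · exact Or.inr (Finset.mem_insert.mpr
                (Or.inl (List.inj_on_of_nodup_map l.2.1 hx hcont hxa)))
            · exact Or.inl (Finset.mem_erase.mpr ⟨hxa, hxS⟩)
          · exact Or.inr (Finset.mem_insert_of_mem hxF)
        · intro f hf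
          rcases Finset.mem_insert.mp hf with rfl | hf
          · exact hcont
          · exact hok.2 f hf
      have hinj' : ∀ x ∈ insert (a,ε) F, ∀ y ∈ insert (a,ε) F, x.1 = y.1 → x = y := by
        intro x hx y hy hxy
        rcases Finset.mem_insert.mp hx with rfl | hx <;>
          rcases Finset.mem_insert.mp hy with rfl | hy
        · rfl
        · exact absurd (by rw [← hxy]; exact ha) (hdis y hy)
        · exact absurd (by rw [hxy]; exact ha) (hdis x hx)
        · exact hinj x hx y hy hxy
      have hdis' : ∀ x ∈ insert (a,ε) F, x.1 ∉ S.erase a := by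
        intro x hx hmem
        rcases Finset.mem_insert.mp hx with rfl | hx
        · exact (Finset.mem_erase.mp hmem).1 rfl
        · exact hdis x hx (Finset.mem_of_mem_erase hmem)
      have hanotF : (a, ε) ∉ F := fun h => hdis _ h ha
      have hcard' : m < (S.erase a).card + (insert (a,ε) F).card := by
        rw [Finset.card_erase_of_mem ha, Finset.card_insert_of_notMem hanotF]
        have h1 : 1 ≤ S.card := Finset.card_pos.mpr ⟨a, ha⟩
        omega
      have hkerase : (S.erase a).card ≤ k := by
        rw [Finset.card_erase_of_mem ha]; omega
      have hcyc' : delF ((insert (a,ε) F).image Prod.fst) m (projP (contW a ε) z) = 0 := by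
        rw [Finset.image_insert]
        cases m with
        | zero => simp [delF]
        | succ d =>
          show bF (insert a Fc) d (projP (contW a ε) z) = 0
          have hz0 : bF Fc d z = 0 := hcyc
          have hdecomp := projP_partition a ε z
          calc bF (insert a Fc) d (projP (contW a ε) z)
              = projP (contW a ε) (bF Fc d (projP (contW a ε) z)) :=
                (projP_bF_cont haFc ε d _ (fun l hl => (hsuppε l hl).2)).symm
            _ = projP (contW a ε) (bF Fc d (projP (contW a ε) z))
                + projP (contW a ε) (bF Fc d (projP (contW a (ε+1)) z))
                + projP (contW a ε) (bF Fc d (projP (afreeW a) z)) := by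
                have hn2 : projP (contW a ε) (bF Fc d (projP (contW a (ε+1)) z)) = 0 := by
                  refine projP_bF_ncont ε d _ fun l hl hc => ?_
                  have h1 := (projP_support _ z l hl).1
                  exact contW_not_other h1 (by rwa [zmod2_add_one_add_one])
                have hn3 : projP (contW a ε) (bF Fc d (projP (afreeW a) z)) = 0 := by
                  refine projP_bF_ncont ε d _ fun l hl hc => ?_
                  exact contW_not_afree hc (projP_support _ z l hl).1
                rw [hn2, hn3, add_zero, add_zero]
            _ = projP (contW a ε) (bF Fc d z) := by
                rw [← map_add, ← map_add, ← map_add, ← map_add, ← hdecomp]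
            _ = 0 := by rw [hz0, map_zero]
      obtain ⟨yε, hysupp, hybF⟩ := ih (S.erase a) (insert (a,ε) F) hkerase hinj' hdis' m
        (projP (contW a ε) z) hcard' hsuppε' hcyc'
      rw [Finset.image_insert] at hybF
      refine ⟨yε, fun l hl => ?_, hybF⟩
      exact ⟨okW_mono ha (hysupp l hl), (hysupp l hl).2 (a, ε) (Finset.mem_insert_self _ _)⟩
    obtain ⟨y0, hy0supp, hy0⟩ := key 0
    obtain ⟨y1, hy1supp, hy1⟩ := key 1
    have hone : (0 : ZMod 2) + 1 = 1 := by decide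
    have hzero : (1 : ZMod 2) + 1 = 0 := by decide
    set z' := z - bF Fc m (y0 + y1) with hz'
    have hproj : ∀ ε : ZMod 2, projP (contW a ε) z' = 0 := by
      intro ε
      have hb0 : projP (contW a 0) (bF Fc m y0) = projP (contW a 0) z := by
        rw [projP_bF_cont haFc 0 m y0 (fun l hl => (hy0supp l hl).2), hy0]
      have hb1 : projP (contW a 1) (bF Fc m y1) = projP (contW a 1) z := by
        rw [projP_bF_cont haFc 1 m y1 (fun l hl => (hy1supp l hl).2), hy1]
      have hb01 : projP (contW a 0) (bF Fc m y1) = 0 := by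
        refine projP_bF_ncont 0 m y1 fun l hl hc => ?_
        exact contW_not_other (hy1supp l hl).2 (by rwa [hzero])
      have hb10 : projP (contW a 1) (bF Fc m y0) = 0 := by
        refine projP_bF_ncont 1 m y0 fun l hl hc => ?_
        exact contW_not_other (hy0supp l hl).2 (by rwa [hone])
      have hε : ε = 0 ∨ ε = 1 := by revert ε; decide
      rw [hz', map_sub, map_add, map_add]
      rcases hε with rfl | rfl
      · rw [hb0, hb01, add_zero, sub_self]
      · rw [hb1, hb10, zero_add, sub_self]
    have hz'free : ∀ l ∈ z'.support, afreeW a l := by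
      have hdec := projP_partition a 0 z'
      rw [hproj 0, hproj (0+1), zero_add, zero_add] at hdec
      intro l hl
      rw [hdec] at hl
      exact (projP_support _ z' l hl).1
    have hz'ok : ∀ l ∈ z'.support, okW S F l := by
      intro l hl
      rw [hz'] at hl
      rcases Finset.mem_union.mp (Finsupp.support_sub hl) with hl' | hl'
      · exact hsupp l hl'
      · refine bF_support_okW (z := y0 + y1) ?_ l hl'
        intro w hw
        rcases Finset.mem_union.mp (Finsupp.support_add hw) with hw' | hw'
        · exact (hy0supp w hw').1
        · exact (hy1supp w hw').1
    have hz'cyc : delF Fc m z' = 0 := by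
      rw [hz', map_sub, hcyc, delF_bF, sub_zero]
    have hcone : bF Fc m (prepA a m z') = z' := by
      cases m with
      | zero => exact cone_zero haFc z'
      | succ d =>
        rw [cone_succ haFc d z' hz'free]
        have hb : bF Fc d z' = 0 := hz'cyc
        rw [hb, map_zero, sub_zero]
    refine ⟨y0 + y1 + prepA a m z', fun l hl => ?_, ?_⟩
    · rcases Finset.mem_union.mp (Finsupp.support_add hl) with hl' | hl'
      · rcases Finset.mem_union.mp (Finsupp.support_add hl') with hl'' | hl''
        · exact (hy0supp l hl'').1
        · exact (hy1supp l hl'').1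
      · obtain ⟨l', hl'', hfree, rfl⟩ := prepA_support z' l hl'
        have hok := hz'ok l' hl''
        constructor
        · intro x hx
          rcases List.mem_cons.mp hx with rfl | hx
          · exact Or.inl ha
          · exact hok.1 x hx
        · intro f hf
          exact List.mem_cons_of_mem _ (hok.2 f hf)
    · rw [map_add, map_add, hcone, ← map_add, hz']
      abel

end SignedAux

/-- Homological sphericity of the complex of signed injective words: for `n ≥ 1`, the
augmented chain complex of words on `Fin n × ZMod 2` with pairwise distinct first
coordinates (whose degree-`d` part is the free abelian group on such `d`-tuples, so
that degree `d` corresponds to homological degree `i = d - 1`, the empty word spanning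
the augmentation `ℤ` in degree `-1`) is exact in every degree except `n`; i.e. the
reduced homology `H̃_i` vanishes for `i ≠ n - 1`. -/
theorem signedInjectiveWordsComplex_spherical (n : ℕ) (hn : 1 ≤ n) (d : ℕ) (hd : d ≠ n) :
    Limits.IsZero ((wordComplex
      (fun l : List (Fin n × ZMod 2) => (l.map Prod.fst).Nodup)
      (fun l j h => ((List.eraseIdx_sublist l j).map Prod.fst).nodup h)).homology d) := by
  classical
  rw [← HomologicalComplex.exactAt_iff_isZero_homology]
  have main := mainStep n n Finset.univ ∅ (by simp) (by simp) (by simp)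
  simp only [Finset.image_empty, Finset.card_univ, Fintype.card_fin, Finset.card_empty,
    add_zero] at main
  have hok : ∀ (m : ℕ) (z : Wd n m →₀ ℤ), ∀ l ∈ z.support, okW Finset.univ ∅ l :=
    fun m z l _ => ⟨fun x _ => Or.inl (Finset.mem_univ _),
      fun x hx => absurd hx (Finset.notMem_empty x)⟩
  rcases d with _ | d
  · -- degree 0
    rw [HomologicalComplex.exactAt_iff' _ 1 0 0 (by simp [ChainComplex.prev])
      (by simp [ChainComplex.next_nat_zero])]
    rw [ShortComplex.moduleCat_exact_iff]
    intro x _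
    obtain ⟨y, -, hy⟩ := main 0 x (by omega) (hok 0 x) rfl
    refine ⟨y, ?_⟩
    have hd10 : (wordComplex (Pw n) (hPw n)).d 1 0
        = ModuleCat.ofHom (wordBoundary (Pw n) (hPw n) 0) := ChainComplex.of_d (fun d => ModuleCat.of ℤ (Word (Pw n) d →₀ ℤ)) (fun d => ModuleCat.ofHom (wordBoundary (Pw n) (hPw n) d)) 0
    show (wordComplex (Pw n) (hPw n)).d 1 0 y = x
    rw [hd10]
    show wordBoundary (Pw n) (hPw n) 0 y = x
    rw [← bF_empty 0]
    exact hy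
  · rw [HomologicalComplex.exactAt_iff' _ (d+2) (d+1) d (by simp [ChainComplex.prev])
      (by simp [ChainComplex.next_nat_succ])]
    rw [ShortComplex.moduleCat_exact_iff]
    intro x hx
    by_cases hlt : d + 1 < n
    · -- below the top degree: apply the main lemma
      have hx' : delF (∅ : Finset (Fin n)) (d+1) x = 0 := by
        show bF (∅ : Finset (Fin n)) d x = 0
        rw [bF_empty d]
        have hd' : (wordComplex (Pw n) (hPw n)).d (d+1) d
            = ModuleCat.ofHom (wordBoundary (Pw n) (hPw n) d) := ChainComplex.of_d (fun d => ModuleCat.of ℤ (Word (Pw n) d →₀ ℤ)) (fun d => ModuleCat.ofHom (wordBoundary (Pw n) (hPw n) d)) d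
        have h := hx
        rw [show ((wordComplex (Pw n) (hPw n)).sc' (d+2) (d+1) d).g
            = (wordComplex (Pw n) (hPw n)).d (d+1) d from rfl, hd'] at h
        exact h
      obtain ⟨y, -, hy⟩ := main (d+1) x hlt (hok (d+1) x) hx'
      refine ⟨y, ?_⟩
      have hd' : (wordComplex (Pw n) (hPw n)).d (d+2) (d+1)
          = ModuleCat.ofHom (wordBoundary (Pw n) (hPw n) (d+1)) := ChainComplex.of_d (fun d => ModuleCat.of ℤ (Word (Pw n) d →₀ ℤ)) (fun d => ModuleCat.ofHom (wordBoundary (Pw n) (hPw n) d)) (d+1)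
      show (wordComplex (Pw n) (hPw n)).d (d+2) (d+1) y = x
      rw [hd']
      show wordBoundary (Pw n) (hPw n) (d+1) y = x
      rw [← bF_empty (d+1)]
      exact hy
    · -- above the top degree: the middle module is zero
      have hempty : ∀ l : Wd n (d+1), False := by
        intro l
        have h2 := List.Nodup.length_le_card l.2.1
        rw [List.length_map, l.2.2, Fintype.card_fin] at h2
        omega
      have hx0 : x = (0 : Wd n (d+1) →₀ ℤ) := by
        apply Finsupp.ext
        intro l
        exact (hempty l).elim
      exact ⟨0, by rw [map_zero, hx0]; rfl⟩
end

section
/- Let K be a nonempty abstract simplicial complex, let n ≥ 0 be an integer, and let K_1, …, K_m be finitely many subcomplexes whose union is K. Suppose that for every k with 1 ≤ k ≤ m and all indices i_1 < i_2 < ⋯ < i_k, the intersection K_{i_1} ∩ ⋯ ∩ K_{i_k} is (n−k+1)-spherical when k ≤ n+1 and is empty when k ≥ n+2. Then K is n-spherical. -/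
open CategoryTheory

variable {α : Type} (P : List α → Prop) (hP : ∀ (l : List α) (j : ℕ), P l → P (l.eraseIdx j))

/-- An abstract simplicial complex on a vertex type `V`: a collection of nonempty finite
sets of vertices (the simplices/faces) closed under passage to nonempty subsets. -/
structure AbstractSimplicialComplex' (V : Type) where
  faces : Set (Finset V)
  not_empty_mem : ∅ ∉ faces
  down_closed : ∀ s ∈ faces, ∀ t ⊆ s, t ≠ ∅ → t ∈ faces

/-- The admissibility predicate for the ordered simplicial chain complex of `K`:
a word is admissible if its entries are pairwise distinct and (if nonempty) span a
simplex of `K`. -/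
def simplexWord {V : Type} [DecidableEq V] (K : AbstractSimplicialComplex' V)
    (l : List V) : Prop :=
  l.Nodup ∧ (l ≠ [] → l.toFinset ∈ K.faces)

theorem simplexWord_eraseIdx {V : Type} [DecidableEq V] (K : AbstractSimplicialComplex' V) :
    ∀ (l : List V) (j : ℕ), simplexWord K l → simplexWord K (l.eraseIdx j) := by
  rintro l j ⟨hnd, hmem⟩
  refine ⟨(List.eraseIdx_sublist l j).nodup hnd, fun hne => ?_⟩
  have hl : l ≠ [] := by
    intro hnil
    rw [hnil] at hne
    simp at hne
  refine K.down_closed l.toFinset (hmem hl) (l.eraseIdx j).toFinset ?_ ?_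
  · intro x hx
    rw [List.mem_toFinset] at hx ⊢
    exact (List.eraseIdx_sublist l j).subset hx
  · intro hempty
    rw [List.toFinset_eq_empty_iff] at hempty
    exact hne hempty

/-- The augmented ordered simplicial chain complex of an abstract simplicial complex:
in (complex) degree `d`, the free abelian group on ordered `d`-tuples of pairwise
distinct vertices spanning a simplex of `K` (so degree `d` corresponds to simplices of
dimension `i = d - 1`, with the empty word spanning the augmentation `ℤ` in degree
`-1`), with boundary the alternating sum of entry deletions. -/
noncomputable def simplicialChainComplex {V : Type} [DecidableEq V]
    (K : AbstractSimplicialComplex' V) : ChainComplex (ModuleCat ℤ) ℕ :=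
  wordComplex (simplexWord K) (simplexWord_eraseIdx K)

/-- A nonempty abstract simplicial complex `K` is `n`-spherical if its reduced homology
`H̃_i` (with `ℤ` coefficients) vanishes for all `i ≠ n`; in terms of the augmented chain
complex, whose degree `d` corresponds to `i = d - 1`, the homology vanishes in every
degree `d ≠ n + 1`. -/
def IsSpherical {V : Type} [DecidableEq V] (K : AbstractSimplicialComplex' V)
    (n : ℕ) : Prop :=
  K.faces.Nonempty ∧ ∀ d : ℕ, d ≠ n + 1 →
    Limits.IsZero ((simplicialChainComplex K).homology d)

/-- The intersection of a nonempty family of simplicial complexes (as collections of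
simplices). -/
def subcomplexInter {V : Type} {m : ℕ} (K : Fin m → AbstractSimplicialComplex' V)
    (S : Finset (Fin m)) (hS : S.Nonempty) : AbstractSimplicialComplex' V where
  faces := ⋂ i ∈ S, (K i).faces
  not_empty_mem := by
    obtain ⟨i, hi⟩ := hS
    intro hmem
    exact (K i).not_empty_mem (Set.mem_iInter₂.mp hmem i hi)
  down_closed := by
    intro s hs t hts htne
    rw [Set.mem_iInter₂] at hs ⊢
    intro i hi
    exact (K i).down_closed s (hs i hi) t hts htne

/-! ### Auxiliary material for the proof -/

section WordMapSec

variable {α : Type}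

/-- Map on words induced by an implication of predicates. -/
def wordMapFun {P Q : List α → Prop} (hPQ : ∀ l, P l → Q l) {d : ℕ} (w : Word P d) :
    Word Q d := ⟨w.1, hPQ _ w.2.1, w.2.2⟩

theorem wordMapFun_injective {P Q : List α → Prop} (hPQ : ∀ l, P l → Q l) {d : ℕ} :
    Function.Injective (wordMapFun hPQ (d := d)) := fun _ _ h =>
  Subtype.ext (congrArg (fun w : Word Q d => w.1) h)

/-- The induced map on free abelian groups. -/
noncomputable def wordMap {P Q : List α → Prop} (hPQ : ∀ l, P l → Q l) (d : ℕ) :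
    (Word P d →₀ ℤ) →ₗ[ℤ] (Word Q d →₀ ℤ) :=
  Finsupp.lmapDomain ℤ ℤ (wordMapFun hPQ)

theorem wordMap_apply {P Q : List α → Prop} (hPQ : ∀ l, P l → Q l) (d : ℕ)
    (x : Word P d →₀ ℤ) :
    wordMap hPQ d x = Finsupp.mapDomain (wordMapFun hPQ) x := rfl

theorem wordMap_single {P Q : List α → Prop} (hPQ : ∀ l, P l → Q l) {d : ℕ}
    (w : Word P d) (b : ℤ) :
    wordMap hPQ d (Finsupp.single w b) = Finsupp.single (wordMapFun hPQ w) b :=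
  Finsupp.mapDomain_single

theorem wordMap_injective {P Q : List α → Prop} (hPQ : ∀ l, P l → Q l) (d : ℕ) :
    Function.Injective (wordMap hPQ d) :=
  Finsupp.mapDomain_injective (wordMapFun_injective hPQ)

theorem wordMap_boundary {P Q : List α → Prop}
    (hP : ∀ (l : List α) (j : ℕ), P l → P (l.eraseIdx j))
    (hQ : ∀ (l : List α) (j : ℕ), Q l → Q (l.eraseIdx j))
    (hPQ : ∀ l, P l → Q l) (d : ℕ) (x : Word P (d + 1) →₀ ℤ) :
    wordMap hPQ d (wordBoundary P hP d x) = wordBoundary Q hQ d (wordMap hPQ (d + 1) x) := by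
  have h : (wordMap hPQ d).comp (wordBoundary P hP d)
      = (wordBoundary Q hQ d).comp (wordMap hPQ (d + 1)) := by
    apply Finsupp.lhom_ext
    intro w b
    rw [LinearMap.comp_apply, LinearMap.comp_apply, wordMap_single, wordBoundary_single,
      wordBoundary_single, map_sum]
    refine Finset.sum_congr rfl fun j _ => ?_
    rw [map_smul, wordMap_single]
    rfl
  exact DFunLike.congr_fun h x

theorem wordMap_wordMap {P Q R : List α → Prop} (hPQ : ∀ l, P l → Q l)
    (hQR : ∀ l, Q l → R l) (d : ℕ) (x : Word P d →₀ ℤ) :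
    wordMap hQR d (wordMap hPQ d x) = wordMap (fun l h => hQR l (hPQ l h)) d x := by
  rw [wordMap_apply, wordMap_apply, wordMap_apply, ← Finsupp.mapDomain_comp]
  rfl

end WordMapSec
section ProdComplex

variable {α : Type}

/-- The direct sum (product) of two word complexes. -/
noncomputable def prodWordComplex {P Q : List α → Prop}
    (hP : ∀ (l : List α) (j : ℕ), P l → P (l.eraseIdx j))
    (hQ : ∀ (l : List α) (j : ℕ), Q l → Q (l.eraseIdx j)) :
    ChainComplex (ModuleCat ℤ) ℕ :=
  ChainComplex.of (fun d => ModuleCat.of ℤ ((Word P d →₀ ℤ) × (Word Q d →₀ ℤ)))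
    (fun d => ModuleCat.ofHom ((wordBoundary P hP d).prodMap (wordBoundary Q hQ d)))
    (fun d => by
      have h : ((wordBoundary P hP d).prodMap (wordBoundary Q hQ d)).comp
          ((wordBoundary P hP (d + 1)).prodMap (wordBoundary Q hQ (d + 1))) = 0 := by
        apply LinearMap.ext
        rintro ⟨x, y⟩
        have h1 := DFunLike.congr_fun (wordBoundary_comp_wordBoundary P hP d) x
        have h2 := DFunLike.congr_fun (wordBoundary_comp_wordBoundary Q hQ d) y
        simp only [LinearMap.comp_apply, LinearMap.prodMap_apply, LinearMap.zero_apply] at *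
        rw [Prod.mk.injEq]
        exact ⟨h1, h2⟩
      exact ModuleCat.hom_ext (LinearMap.ext fun x => DFunLike.congr_fun h x))

theorem wordComplex_d {P : List α → Prop}
    (hP : ∀ (l : List α) (j : ℕ), P l → P (l.eraseIdx j)) (e : ℕ) :
    (wordComplex P hP).d (e + 1) e = ModuleCat.ofHom (wordBoundary P hP e) := by
  unfold wordComplex; exact ChainComplex.of_d (fun d => ModuleCat.of ℤ (Word P d →₀ ℤ))
    (fun d => ModuleCat.ofHom (wordBoundary P hP d)) e

theorem prodWordComplex_d {P Q : List α → Prop}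
    (hP : ∀ (l : List α) (j : ℕ), P l → P (l.eraseIdx j))
    (hQ : ∀ (l : List α) (j : ℕ), Q l → Q (l.eraseIdx j)) (e : ℕ) :
    (prodWordComplex hP hQ).d (e + 1) e
      = ModuleCat.ofHom ((wordBoundary P hP e).prodMap (wordBoundary Q hQ e)) := by
  unfold prodWordComplex; exact ChainComplex.of_d
    (fun d => ModuleCat.of ℤ ((Word P d →₀ ℤ) × (Word Q d →₀ ℤ)))
    (fun d => ModuleCat.ofHom ((wordBoundary P hP d).prodMap (wordBoundary Q hQ d))) e

end ProdComplex

section ExactHelpers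

open HomologicalComplex

theorem exactAt_succ_iff (C : ChainComplex (ModuleCat ℤ) ℕ) (e : ℕ) :
    C.ExactAt (e + 1) ↔ ∀ x : C.X (e + 1), C.d (e + 1) e x = 0 →
      ∃ y : C.X (e + 1 + 1), C.d (e + 1 + 1) (e + 1) y = x := by
  rw [HomologicalComplex.exactAt_iff' C (e + 1 + 1) (e + 1) e (ChainComplex.prev ℕ (e + 1))
    (ChainComplex.next_nat_succ e), ShortComplex.moduleCat_exact_iff]
  exact Iff.rfl

end ExactHelpers
section MVWords

open HomologicalComplex

variable {α : Type} [DecidableEq α] {PA PB PU : List α → Prop}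

/-- The intersection predicate. -/
abbrev interP (PA PB : List α → Prop) : List α → Prop := fun l => PA l ∧ PB l

omit [DecidableEq α] in
theorem interP_erase (hPA : ∀ (l : List α) (j : ℕ), PA l → PA (l.eraseIdx j))
    (hPB : ∀ (l : List α) (j : ℕ), PB l → PB (l.eraseIdx j)) :
    ∀ (l : List α) (j : ℕ), interP PA PB l → interP PA PB (l.eraseIdx j) :=
  fun l j h => ⟨hPA l j h.1, hPB l j h.2⟩

variable (hPA : ∀ (l : List α) (j : ℕ), PA l → PA (l.eraseIdx j))
  (hPB : ∀ (l : List α) (j : ℕ), PB l → PB (l.eraseIdx j))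
  (hPU : ∀ (l : List α) (j : ℕ), PU l → PU (l.eraseIdx j))
  (hAU : ∀ l, PA l → PU l) (hBU : ∀ l, PB l → PU l)

/-- First map of the Mayer–Vietoris sequence. -/
noncomputable def mvF :
    wordComplex (interP PA PB) (interP_erase hPA hPB) ⟶ prodWordComplex hPA hPB :=
  ChainComplex.ofHom
    (fun d => ModuleCat.ofHom
      ((wordMap (fun _ h => h.1) d).prod (wordMap (fun _ h => h.2) d)))
    (fun d => by
      rw [prodWordComplex_d, wordComplex_d]
      apply ModuleCat.hom_ext
      apply LinearMap.ext
      intro x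
      show ((wordBoundary PA hPA d).prodMap (wordBoundary PB hPB d))
          (((wordMap (fun _ h => h.1) (d + 1)).prod (wordMap (fun _ h => h.2) (d + 1))) x)
        = ((wordMap (fun _ h => h.1) d).prod (wordMap (fun _ h => h.2) d))
          (wordBoundary (interP PA PB) (interP_erase hPA hPB) d x)
      simp only [LinearMap.prod_apply, LinearMap.prodMap_apply, Pi.prod]
      rw [Prod.mk.injEq]
      constructor
      · exact (wordMap_boundary (interP_erase hPA hPB) hPA (fun _ h => h.1) d x).symm
      · exact (wordMap_boundary (interP_erase hPA hPB) hPB (fun _ h => h.2) d x).symm)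

/-- Second map of the Mayer–Vietoris sequence. -/
noncomputable def mvG :
    prodWordComplex hPA hPB ⟶ wordComplex PU hPU :=
  ChainComplex.ofHom
    (fun d => ModuleCat.ofHom ((wordMap hAU d).coprod (-(wordMap hBU d))))
    (fun d => by
      rw [prodWordComplex_d, wordComplex_d]
      apply ModuleCat.hom_ext
      apply LinearMap.ext
      rintro ⟨x, y⟩
      show wordBoundary PU hPU d (((wordMap hAU (d + 1)).coprod (-(wordMap hBU (d + 1)))) (x, y))
        = ((wordMap hAU d).coprod (-(wordMap hBU d)))
            (((wordBoundary PA hPA d).prodMap (wordBoundary PB hPB d)) (x, y))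
      simp only [LinearMap.coprod_apply, LinearMap.prodMap_apply, LinearMap.neg_apply,
        map_add, map_neg]
      rw [wordMap_boundary hPA hPU hAU d x, wordMap_boundary hPB hPU hBU d y])

/-- The Mayer–Vietoris short complex of chain complexes. -/
noncomputable def mvSES : ShortComplex (ChainComplex (ModuleCat ℤ) ℕ) :=
  ShortComplex.mk (mvF hPA hPB) (mvG hPA hPB hPU hAU hBU) (by
    ext d : 1
    rw [HomologicalComplex.comp_f, HomologicalComplex.zero_f]
    apply ModuleCat.hom_ext
    apply LinearMap.ext
    intro x
    show ((wordMap hAU d).coprod (-(wordMap hBU d)))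
        (((wordMap (fun _ h => h.1) d).prod (wordMap (fun _ h => h.2) d)) x) = 0
    simp only [LinearMap.coprod_apply, LinearMap.prod_apply, LinearMap.neg_apply, Pi.prod]
    erw [wordMap_wordMap, wordMap_wordMap]
    exact add_neg_eq_zero.2 rfl)
theorem mvSES_shortExact (hcover : ∀ l, PU l → PA l ∨ PB l) :
    (mvSES hPA hPB hPU hAU hBU).ShortExact := by
  apply HomologicalComplex.shortExact_of_degreewise_shortExact
  intro d
  haveI : DecidableEq (Word PU d) := fun a b =>
    decidable_of_iff (a.1 = b.1) ⟨Subtype.ext, congrArg (fun w : Word PU d => w.1)⟩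
  have hinj : Function.Injective
      ((wordMap (P := interP PA PB) (fun _ h => h.1) d).prod (wordMap (fun _ h => h.2) d)) :=
    fun a b hab => wordMap_injective (fun _ h => h.1) d (congrArg Prod.fst hab)
  have hsurj : Function.Surjective ((wordMap hAU d).coprod (-(wordMap hBU d))) := by
    intro y
    induction y using Finsupp.induction with
    | zero => exact ⟨0, map_zero _⟩
    | single_add w b f _ _ ih =>
      obtain ⟨p, hp⟩ := ih
      rcases hcover w.1 w.2.1 with hA' | hB'
      · refine ⟨(Finsupp.single ⟨w.1, hA', w.2.2⟩ b, 0) + p, ?_⟩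
        rw [map_add, hp]
        congr 1
        show wordMap hAU d (Finsupp.single ⟨w.1, hA', w.2.2⟩ b) + (-(wordMap hBU d)) 0
          = Finsupp.single w b
        erw [map_zero, add_zero, wordMap_single]
        rfl
      · refine ⟨(0, Finsupp.single ⟨w.1, hB', w.2.2⟩ (-b)) + p, ?_⟩
        rw [map_add, hp]
        congr 1
        show wordMap hAU d 0 + (-(wordMap hBU d)) (Finsupp.single ⟨w.1, hB', w.2.2⟩ (-b))
          = Finsupp.single w b
        erw [map_zero, zero_add, LinearMap.neg_apply, wordMap_single, ← Finsupp.single_neg,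
          neg_neg]
        rfl
  have hex : ∀ p : (Word PA d →₀ ℤ) × (Word PB d →₀ ℤ),
      ((wordMap hAU d).coprod (-(wordMap hBU d))) p = 0 →
      ∃ z : Word (interP PA PB) d →₀ ℤ,
        ((wordMap (P := interP PA PB) (fun _ h => h.1) d).prod (wordMap (fun _ h => h.2) d)) z
          = p := by
    rintro ⟨x, y⟩ hp
    have hxy : Finsupp.mapDomain (wordMapFun hAU) x = Finsupp.mapDomain (wordMapFun hBU) y := by
      have h' : wordMap hAU d x + -(wordMap hBU d y) = 0 := hp
      exact add_neg_eq_zero.1 h'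
    have hsupp : ↑x.support ⊆
        Set.range (wordMapFun (fun l (h : interP PA PB l) => h.1) (d := d)) := by
      intro w hw
      simp only [Finset.mem_coe, Finsupp.mem_support_iff] at hw
      have h1 : Finsupp.mapDomain (wordMapFun hAU) x (wordMapFun hAU w) = x w :=
        Finsupp.mapDomain_apply (wordMapFun_injective hAU) x w
      rw [hxy] at h1
      have h2 : wordMapFun hAU w ∈ (Finsupp.mapDomain (wordMapFun hBU) y).support :=
        Finsupp.mem_support_iff.2 (by rw [h1]; exact hw)
      obtain ⟨u, _, huw⟩ := Finset.mem_image.1 (Finsupp.mapDomain_support h2)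
      have hlist : u.1 = w.1 := congrArg (fun w : Word PU d => w.1) huw
      exact ⟨⟨w.1, ⟨w.2.1, hlist ▸ u.2.1⟩, w.2.2⟩, rfl⟩
    set z := Finsupp.comapDomain (wordMapFun (fun l (h : interP PA PB l) => h.1)) x
      (wordMapFun_injective _).injOn with hzdef
    have hzx : Finsupp.mapDomain (wordMapFun (fun l (h : interP PA PB l) => h.1)) z = x :=
      Finsupp.mapDomain_comapDomain _ (wordMapFun_injective _) x hsupp
    have hzy : Finsupp.mapDomain (wordMapFun (fun l (h : interP PA PB l) => h.2)) z = y := by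
      apply Finsupp.mapDomain_injective (wordMapFun_injective hBU)
      rw [← Finsupp.mapDomain_comp,
        show (wordMapFun hBU ∘ wordMapFun (fun l (h : interP PA PB l) => h.2))
          = (wordMapFun hAU ∘ wordMapFun (fun l (h : interP PA PB l) => h.1))
          from funext fun w => Subtype.ext rfl,
        Finsupp.mapDomain_comp, hzx, hxy]
    refine ⟨z, ?_⟩
    show (Finsupp.mapDomain (wordMapFun (fun l (h : interP PA PB l) => h.1)) z,
      Finsupp.mapDomain (wordMapFun (fun l (h : interP PA PB l) => h.2)) z) = (x, y)
    rw [hzx, hzy]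
  haveI : Mono (((mvSES hPA hPB hPU hAU hBU).map (HomologicalComplex.eval _ _ d)).f) :=
    (ModuleCat.mono_iff_injective _).2 hinj
  haveI : Epi (((mvSES hPA hPB hPU hAU hBU).map (HomologicalComplex.eval _ _ d)).g) :=
    (ModuleCat.epi_iff_surjective _).2 hsurj
  exact ⟨(ShortComplex.moduleCat_exact_iff _).2 hex⟩
omit [DecidableEq α] in
theorem isZero_homology_prodWordComplex (e : ℕ)
    (hA : Limits.IsZero ((wordComplex PA hPA).homology (e + 1)))
    (hB : Limits.IsZero ((wordComplex PB hPB).homology (e + 1))) :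
    Limits.IsZero ((prodWordComplex hPA hPB).homology (e + 1)) := by
  rw [← HomologicalComplex.exactAt_iff_isZero_homology] at hA hB ⊢
  rw [exactAt_succ_iff] at hA hB ⊢
  simp only [wordComplex_d, prodWordComplex_d] at hA hB ⊢
  rintro ⟨x, y⟩ hp
  have h1 : wordBoundary PA hPA e x = 0 := congrArg Prod.fst hp
  have h2 : wordBoundary PB hPB e y = 0 := congrArg Prod.snd hp
  obtain ⟨x', hx'⟩ := hA x h1
  obtain ⟨y', hy'⟩ := hB y h2
  refine ⟨(x', y'), ?_⟩
  show (wordBoundary PA hPA (e + 1) x', wordBoundary PB hPB (e + 1) y') = (x, y)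
  rw [Prod.mk.injEq]
  exact ⟨hx', hy'⟩

end MVWords

theorem wordComplex_congr {α : Type} {P Q : List α → Prop}
    (hP : ∀ (l : List α) (j : ℕ), P l → P (l.eraseIdx j))
    (hQ : ∀ (l : List α) (j : ℕ), Q l → Q (l.eraseIdx j))
    (h : P = Q) : wordComplex P hP = wordComplex Q hQ := by
  subst h; rfl

section Simplicial

open HomologicalComplex

variable {V : Type} [DecidableEq V]

omit [DecidableEq V] in
theorem ASC_ext {A B : AbstractSimplicialComplex' V} (h : A.faces = B.faces) : A = B := by
  cases A; cases B; cases h; rfl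

theorem simplicialChainComplex_d (K : AbstractSimplicialComplex' V) (e : ℕ) :
    (simplicialChainComplex K).d (e + 1) e
      = ModuleCat.ofHom (wordBoundary (simplexWord K) (simplexWord_eraseIdx K) e) :=
  wordComplex_d _ e

/-- The empty word. -/
def emptyWord (K : AbstractSimplicialComplex' V) : Word (simplexWord K) 0 :=
  ⟨[], ⟨List.nodup_nil, fun h => absurd rfl h⟩, rfl⟩

theorem eq_emptyWord (K : AbstractSimplicialComplex' V) (w : Word (simplexWord K) 0) :
    w = emptyWord K :=
  Subtype.ext (List.length_eq_zero_iff.mp w.2.2)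

/-- Reduced homology of a nonempty complex vanishes in degree `0` of the augmented
complex. -/
theorem isZero_homology_zero (K : AbstractSimplicialComplex' V) (hne : K.faces.Nonempty) :
    Limits.IsZero ((simplicialChainComplex K).homology 0) := by
  rw [← exactAt_iff_isZero_homology,
    exactAt_iff' _ (0 + 1) 0 0 (ChainComplex.prev ℕ 0) ChainComplex.next_nat_zero,
    ShortComplex.moduleCat_exact_iff]
  have key : ∀ x : Word (simplexWord K) 0 →₀ ℤ,
      ∃ y : Word (simplexWord K) (0 + 1) →₀ ℤ,
        wordBoundary (simplexWord K) (simplexWord_eraseIdx K) 0 y = x := by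
    intro x
    obtain ⟨s, hs⟩ := hne
    have hsne : s ≠ ∅ := fun h => K.not_empty_mem (h ▸ hs)
    obtain ⟨v, hv⟩ := Finset.nonempty_of_ne_empty hsne
    have hv' : {v} ∈ K.faces :=
      K.down_closed s hs {v} (Finset.singleton_subset_iff.2 hv) (Finset.singleton_ne_empty v)
    have hw1 : simplexWord K [v] := ⟨List.nodup_singleton v, fun _ => by simpa using hv'⟩
    refine ⟨Finsupp.single ⟨[v], hw1, rfl⟩ (x (emptyWord K)), ?_⟩
    erw [wordBoundary_single, Fin.sum_univ_one]
    simp only [Fin.val_zero, pow_zero, one_smul]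
    have herase : eraseWord (simplexWord K) (simplexWord_eraseIdx K) ⟨[v], hw1, rfl⟩ 0
        = emptyWord K := Subtype.ext rfl
    rw [herase]
    ext w
    rw [eq_emptyWord K w]
    simp
  intro x0 _
  obtain ⟨y, hy⟩ := key x0
  refine ⟨y, ?_⟩
  show (simplicialChainComplex K).d (0 + 1) 0 y = x0
  rw [simplicialChainComplex_d]
  exact hy
/-- The homology of the complex with no faces vanishes in positive degrees. -/
theorem isZero_homology_of_faces_empty (K : AbstractSimplicialComplex' V)
    (h : K.faces = ∅) (e : ℕ) :
    Limits.IsZero ((simplicialChainComplex K).homology (e + 1)) := by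
  rw [← exactAt_iff_isZero_homology, exactAt_succ_iff]
  intro x hx
  have hempty : IsEmpty (Word (simplexWord K) (e + 1)) := by
    refine ⟨fun w => ?_⟩
    have hne : w.1 ≠ [] := by
      intro hl
      have := w.2.2
      rw [hl] at this
      simp at this
    have hmem := w.2.1.2 hne
    rw [h] at hmem
    exact hmem
  have hx0 : (x : Word (simplexWord K) (e + 1) →₀ ℤ) = 0 :=
    Finsupp.ext fun w => hempty.elim w
  exact ⟨0, by rw [map_zero]; exact hx0.symm⟩

end Simplicial
section MVSimplicial

open HomologicalComplex

variable {V : Type} [DecidableEq V]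

/-- The union of a family of simplicial complexes. -/
def unionComplex {m : ℕ} (K : Fin m → AbstractSimplicialComplex' V) :
    AbstractSimplicialComplex' V where
  faces := ⋃ i, (K i).faces
  not_empty_mem := by
    intro h
    obtain ⟨i, hi⟩ := Set.mem_iUnion.mp h
    exact (K i).not_empty_mem hi
  down_closed := by
    intro s hs t hts htne
    obtain ⟨i, hi⟩ := Set.mem_iUnion.mp hs
    exact Set.mem_iUnion.mpr ⟨i, (K i).down_closed s hi t hts htne⟩

/-- The intersection of two simplicial complexes. -/
def interComplex (A B : AbstractSimplicialComplex' V) : AbstractSimplicialComplex' V where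
  faces := A.faces ∩ B.faces
  not_empty_mem := fun h => A.not_empty_mem h.1
  down_closed := fun s hs t hts htne =>
    ⟨A.down_closed s hs.1 t hts htne, B.down_closed s hs.2 t hts htne⟩

/-- Mayer–Vietoris argument: vanishing of the homology of a union. -/
theorem mayerVietoris (A B U I : AbstractSimplicialComplex' V)
    (hU : U.faces = A.faces ∪ B.faces) (hI : I.faces = A.faces ∩ B.faces) (e : ℕ)
    (hA : Limits.IsZero ((simplicialChainComplex A).homology (e + 1)))
    (hB : Limits.IsZero ((simplicialChainComplex B).homology (e + 1)))
    (hIz : Limits.IsZero ((simplicialChainComplex I).homology e)) :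
    Limits.IsZero ((simplicialChainComplex U).homology (e + 1)) := by
  have hAU : ∀ l, simplexWord A l → simplexWord U l := fun l h =>
    ⟨h.1, fun hne => by rw [hU]; exact Or.inl (h.2 hne)⟩
  have hBU : ∀ l, simplexWord B l → simplexWord U l := fun l h =>
    ⟨h.1, fun hne => by rw [hU]; exact Or.inr (h.2 hne)⟩
  have hcover : ∀ l, simplexWord U l → simplexWord A l ∨ simplexWord B l := by
    intro l h
    by_cases hl : l = []
    · subst hl
      exact Or.inl ⟨h.1, fun c => absurd rfl c⟩
    · have h2 := h.2 hl
      rw [hU] at h2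
      rcases h2 with h2 | h2
      · exact Or.inl ⟨h.1, fun _ => h2⟩
      · exact Or.inr ⟨h.1, fun _ => h2⟩
  have hpred : interP (simplexWord A) (simplexWord B) = simplexWord I := by
    funext l
    apply propext
    constructor
    · rintro ⟨h1, h2⟩
      exact ⟨h1.1, fun hne => by rw [hI]; exact ⟨h1.2 hne, h2.2 hne⟩⟩
    · intro h
      have hmem : l ≠ [] → l.toFinset ∈ A.faces ∩ B.faces := fun hne => by
        rw [← hI]; exact h.2 hne
      exact ⟨⟨h.1, fun hne => (hmem hne).1⟩, ⟨h.1, fun hne => (hmem hne).2⟩⟩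
  have hSE := mvSES_shortExact (simplexWord_eraseIdx A) (simplexWord_eraseIdx B)
    (simplexWord_eraseIdx U) hAU hBU hcover
  have hD : Limits.IsZero
      ((prodWordComplex (simplexWord_eraseIdx A) (simplexWord_eraseIdx B)).homology (e + 1)) :=
    isZero_homology_prodWordComplex (simplexWord_eraseIdx A) (simplexWord_eraseIdx B) e hA hB
  have hIz' : Limits.IsZero
      ((wordComplex (interP (simplexWord A) (simplexWord B))
        (interP_erase (simplexWord_eraseIdx A) (simplexWord_eraseIdx B))).homology e) := by
    rw [wordComplex_congr (interP_erase (simplexWord_eraseIdx A) (simplexWord_eraseIdx B))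
      (simplexWord_eraseIdx I) hpred]
    exact hIz
  have hrel : (ComplexShape.down ℕ).Rel (e + 1) e := by simp
  have h3 := hSE.homology_exact₃ (e + 1) e hrel
  have hf0 : HomologicalComplex.homologyMap
      (mvSES (simplexWord_eraseIdx A) (simplexWord_eraseIdx B) (simplexWord_eraseIdx U)
        hAU hBU).g (e + 1) = 0 :=
    hD.eq_of_src _ 0
  have hg0 : hSE.δ (e + 1) e hrel = 0 := hIz'.eq_of_tgt _ 0
  exact h3.isZero_of_both_zeros hf0 hg0

end MVSimplicial
section MainInduction

variable {V : Type} [DecidableEq V]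

omit [DecidableEq V] in
theorem subcomplexInter_map {m : ℕ} (K : Fin (m + 2) → AbstractSimplicialComplex' V)
    (S : Finset (Fin (m + 1))) (hS : S.Nonempty) :
    subcomplexInter (fun i => K i.castSucc) S hS
      = subcomplexInter K (S.map Fin.castSuccEmb) (Finset.Nonempty.map hS) := by
  apply ASC_ext
  ext x
  constructor
  · intro hx
    apply Set.mem_iInter₂.mpr
    intro j hj
    obtain ⟨i, hi, rfl⟩ := Finset.mem_map.mp hj
    exact Set.mem_iInter₂.mp hx i hi
  · intro hx
    apply Set.mem_iInter₂.mpr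
    intro i hi
    exact Set.mem_iInter₂.mp hx (Fin.castSuccEmb i)
      (Finset.mem_map.mpr ⟨i, hi, rfl⟩)

theorem last_not_mem_map {m : ℕ} (S : Finset (Fin (m + 1))) :
    Fin.last (m + 1) ∉ S.map Fin.castSuccEmb := by
  intro h
  obtain ⟨i, _, hi⟩ := Finset.mem_map.mp h
  exact (Fin.castSucc_lt_last i).ne hi

omit [DecidableEq V] in
theorem subcomplexInter_insert_last {m : ℕ} (K : Fin (m + 2) → AbstractSimplicialComplex' V)
    (S : Finset (Fin (m + 1))) (hS : S.Nonempty) :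
    subcomplexInter (fun i => interComplex (K i.castSucc) (K (Fin.last (m + 1)))) S hS
      = subcomplexInter K (insert (Fin.last (m + 1)) (S.map Fin.castSuccEmb))
          ⟨_, Finset.mem_insert_self _ _⟩ := by
  apply ASC_ext
  ext x
  constructor
  · intro hx
    apply Set.mem_iInter₂.mpr
    intro j hj
    rcases Finset.mem_insert.mp hj with hj | hj
    · subst hj
      obtain ⟨i, hi⟩ := hS
      exact (Set.mem_iInter₂.mp hx i hi).2
    · obtain ⟨i, hi, rfl⟩ := Finset.mem_map.mp hj
      exact (Set.mem_iInter₂.mp hx i hi).1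
  · intro hx
    apply Set.mem_iInter₂.mpr
    intro i hi
    refine ⟨Set.mem_iInter₂.mp hx (Fin.castSuccEmb i)
      (Finset.mem_insert.mpr (Or.inr (Finset.mem_map.mpr ⟨i, hi, rfl⟩))), ?_⟩
    exact Set.mem_iInter₂.mp hx (Fin.last (m + 1)) (Finset.mem_insert_self _ _)

theorem coverClaim (m : ℕ) :
    ∀ (t : ℕ), 1 ≤ t → ∀ (K : Fin (m + 1) → AbstractSimplicialComplex' V),
    (∀ (S : Finset (Fin (m + 1))) (hS : S.Nonempty), S.card ≤ t →
      (subcomplexInter K S hS).faces.Nonempty) →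
    (∀ (S : Finset (Fin (m + 1))) (hS : S.Nonempty), S.card ≤ t → ∀ d : ℕ,
      d ≠ t + 1 - S.card →
      Limits.IsZero ((simplicialChainComplex (subcomplexInter K S hS)).homology d)) →
    (∀ (S : Finset (Fin (m + 1))) (hS : S.Nonempty), t + 1 ≤ S.card →
      (subcomplexInter K S hS).faces = ∅) →
    ∀ d : ℕ, d ≠ t →
      Limits.IsZero ((simplicialChainComplex (unionComplex K)).homology d) := by
  induction m with
  | zero =>
    intro t ht K _ h2 _ d hd
    have hU : unionComplex K = subcomplexInter K {0} ⟨0, Finset.mem_singleton_self 0⟩ := by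
      apply ASC_ext
      ext x
      constructor
      · intro hx
        obtain ⟨i, hi⟩ := Set.mem_iUnion.mp hx
        apply Set.mem_iInter₂.mpr
        intro j _
        have hij : i = j := Fin.ext (by have := i.isLt; have := j.isLt; omega)
        exact hij ▸ hi
      · intro hx
        exact Set.mem_iUnion.mpr ⟨0, Set.mem_iInter₂.mp hx 0 (Finset.mem_singleton_self 0)⟩
    rw [hU]
    exact h2 {0} _ (by simpa using ht) d (by simpa using hd)
  | succ m ih =>
    intro t ht K h1 h2 h3 d hd
    -- the last complex and the union of the others
    have hsing : ∀ (i : Fin (m + 2)) (hS : ({i} : Finset (Fin (m + 2))).Nonempty),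
        subcomplexInter K {i} hS = K i := by
      intro i hS
      apply ASC_ext
      ext x
      constructor
      · intro hx
        exact Set.mem_iInter₂.mp hx i (Finset.mem_singleton_self i)
      · intro hx
        apply Set.mem_iInter₂.mpr
        intro j hj
        rw [Finset.mem_singleton.mp hj]
        exact hx
    have hUfaces : (unionComplex K).faces
        = (unionComplex (fun i : Fin (m + 1) => K i.castSucc)).faces
          ∪ (K (Fin.last (m + 1))).faces := by
      ext x
      constructor
      · intro hx
        obtain ⟨j, hj⟩ := Set.mem_iUnion.mp hx
        rcases Fin.eq_castSucc_or_eq_last j with ⟨i, rfl⟩ | rfl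
        · exact Or.inl (Set.mem_iUnion.mpr ⟨i, hj⟩)
        · exact Or.inr hj
      · rintro (hx | hx)
        · obtain ⟨i, hi⟩ := Set.mem_iUnion.mp hx
          exact Set.mem_iUnion.mpr ⟨i.castSucc, hi⟩
        · exact Set.mem_iUnion.mpr ⟨Fin.last (m + 1), hx⟩
    by_cases hd0 : d = 0
    · subst hd0
      apply isZero_homology_zero
      have := h1 {Fin.last (m + 1)} ⟨_, Finset.mem_singleton_self _⟩ (by simpa using ht)
      erw [hsing] at this
      obtain ⟨s, hs⟩ := this
      exact ⟨s, Set.mem_iUnion.mpr ⟨Fin.last (m + 1), hs⟩⟩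
    · obtain ⟨e, rfl⟩ : ∃ e, d = e + 1 := ⟨d - 1, by omega⟩
      -- homology of the union of the first m+1 complexes
      have hB : Limits.IsZero ((simplicialChainComplex
          (unionComplex (fun i : Fin (m + 1) => K i.castSucc))).homology (e + 1)) := by
        apply ih t ht _ ?_ ?_ ?_ _ hd
        · intro S hS hc
          rw [subcomplexInter_map]
          exact h1 _ _ (by simpa using hc)
        · intro S hS hc d' hd'
          rw [subcomplexInter_map]
          exact h2 _ _ (by simpa using hc) d' (by simpa using hd')
        · intro S hS hc
          rw [subcomplexInter_map]
          exact h3 _ _ (by simpa using hc)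
      -- homology of the last complex
      have hA : Limits.IsZero ((simplicialChainComplex (K (Fin.last (m + 1)))).homology
          (e + 1)) := by
        have := h2 {Fin.last (m + 1)} ⟨_, Finset.mem_singleton_self _⟩ (by simpa using ht)
          (e + 1) (by simpa using hd)
        erw [hsing] at this
        exact this
      -- homology of the intersection
      have hI : Limits.IsZero ((simplicialChainComplex (interComplex
          (unionComplex (fun i : Fin (m + 1) => K i.castSucc))
          (K (Fin.last (m + 1))))).homology e) := by
        have hIfaces : (interComplex (unionComplex (fun i : Fin (m + 1) => K i.castSucc))
            (K (Fin.last (m + 1)))).faces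
            = ⋃ i : Fin (m + 1), (interComplex (K i.castSucc) (K (Fin.last (m + 1)))).faces := by
          show (⋃ i, (K (Fin.castSucc i)).faces) ∩ (K (Fin.last (m + 1))).faces = _
          rw [Set.iUnion_inter]
          rfl
        by_cases ht1 : t = 1
        · -- the intersection is empty
          subst ht1
          have hempty : (interComplex (unionComplex (fun i : Fin (m + 1) => K i.castSucc))
              (K (Fin.last (m + 1)))).faces = ∅ := by
            rw [hIfaces]
            apply Set.eq_empty_iff_forall_notMem.mpr
            rintro s hs
            obtain ⟨i, hi⟩ := Set.mem_iUnion.mp hs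
            have hne : i.castSucc ≠ Fin.last (m + 1) := (Fin.castSucc_lt_last i).ne
            have hcard : ({i.castSucc, Fin.last (m + 1)} : Finset (Fin (m + 2))).card = 2 :=
              Finset.card_pair hne
            have h3' := h3 {i.castSucc, Fin.last (m + 1)} ⟨_, Finset.mem_insert_self _ _⟩
              (by rw [hcard])
            have hmem : s ∈ (subcomplexInter K {i.castSucc, Fin.last (m + 1)}
                ⟨_, Finset.mem_insert_self _ _⟩).faces := by
              apply Set.mem_iInter₂.mpr
              intro j hj
              rcases Finset.mem_insert.mp hj with rfl | hj
              · exact hi.1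
              · rw [Finset.mem_singleton.mp hj]
                exact hi.2
            rw [h3'] at hmem
            exact hmem
          obtain ⟨e', rfl⟩ : ∃ e', e = e' + 1 := ⟨e - 1, by omega⟩
          exact isZero_homology_of_faces_empty _ hempty e'
        · -- apply the induction hypothesis with parameter t - 1
          obtain ⟨t', rfl⟩ : ∃ t', t = t' + 1 := ⟨t - 1, by omega⟩
          have ht' : 1 ≤ t' := by omega
          have htransport : unionComplex (fun i : Fin (m + 1) =>
              interComplex (K i.castSucc) (K (Fin.last (m + 1))))
              = interComplex (unionComplex (fun i : Fin (m + 1) => K i.castSucc))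
                (K (Fin.last (m + 1))) := by
            apply ASC_ext
            rw [hIfaces]
            rfl
          rw [← htransport]
          have hcard : ∀ S : Finset (Fin (m + 1)),
              (insert (Fin.last (m + 1)) (S.map Fin.castSuccEmb)).card = S.card + 1 := by
            intro S
            rw [Finset.card_insert_of_notMem (last_not_mem_map S), Finset.card_map]
          apply ih t' ht' _ ?_ ?_ ?_ e (by omega)
          · intro S hS hc
            rw [subcomplexInter_insert_last]
            exact h1 _ _ (by rw [hcard]; omega)
          · intro S hS hc d' hd'
            rw [subcomplexInter_insert_last]
            refine h2 _ _ (by rw [hcard]; omega) d' ?_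
            rw [hcard]
            omega
          · intro S hS hc
            rw [subcomplexInter_insert_last]
            exact h3 _ _ (by rw [hcard]; omega)
      exact mayerVietoris (unionComplex (fun i : Fin (m + 1) => K i.castSucc))
        (K (Fin.last (m + 1))) (unionComplex K)
        (interComplex (unionComplex (fun i : Fin (m + 1) => K i.castSucc))
          (K (Fin.last (m + 1)))) hUfaces rfl e hB hA hI

end MainInduction
/-- Quillen's lemma on spherical covers: if a nonempty simplicial complex `L` is covered
by subcomplexes `K_1, …, K_m` such that every `k`-fold intersection
`K_{i_1} ∩ ⋯ ∩ K_{i_k}` (for `i_1 < ⋯ < i_k`) is `(n - k + 1)`-spherical for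
`k ≤ n + 1` and empty for `k ≥ n + 2`, then `L` is `n`-spherical. -/
theorem isSpherical_of_cover {V : Type} [DecidableEq V]
    (L : AbstractSimplicialComplex' V) (hne : L.faces.Nonempty) (n : ℕ) (m : ℕ)
    (K : Fin m → AbstractSimplicialComplex' V)
    (hsub : ∀ i, (K i).faces ⊆ L.faces)
    (hcover : (⋃ i, (K i).faces) = L.faces)
    (hint : ∀ (S : Finset (Fin m)) (hS : S.Nonempty), S.card ≤ n + 1 →
      IsSpherical (subcomplexInter K S hS) (n + 1 - S.card))
    (hempty : ∀ (S : Finset (Fin m)) (hS : S.Nonempty), n + 2 ≤ S.card →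
      (subcomplexInter K S hS).faces = ∅) :
    IsSpherical L n := by
  cases m with
  | zero =>
    exfalso
    obtain ⟨s, hs⟩ := hne
    rw [← hcover] at hs
    obtain ⟨i, _⟩ := Set.mem_iUnion.mp hs
    exact i.elim0
  | succ m' =>
    refine ⟨hne, ?_⟩
    have hL : unionComplex K = L := ASC_ext hcover
    intro d hd'
    rw [← hL]
    apply coverClaim m' (n + 1) (Nat.le_add_left 1 n) K ?_ ?_ ?_ d hd'
    · intro S hS hc
      exact (hint S hS hc).1
    · intro S hS hc d' hd2
      refine (hint S hS hc).2 d' ?_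
      have hcard1 : 1 ≤ S.card := Finset.card_pos.mpr hS
      omega
    · intro S hS hc
      exact hempty S hS (by omega)
end
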